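/- arXiv:0812.4076 — 4 statements merged into one kernel-verified Lean document; each statement's English description precedes it below -/
import Mathlib

section
/- Let X, h : Z⁺ → ℝ^{2k} be smooth functions satisfying X_s + J₀X_t = h, and let 0 < d < 1/2. Assume sup_{t∈S¹} e^{ds}|D^γ h(s,t)| → 0 as s → +∞ for every multi-index γ, sup_{t∈S¹}|X(s,t)| → 0 as s → +∞, and ∫₀¹ X(s,t) dt = 0 for every s ≥ 0. Then e^{ds}(∫₀¹ |X(s,t)|² dt)^{1/2} → 0 as s → +∞. -/
open Filter Set

noncomputable section

/-- `ℝ^{2k}`, regarded as `ℝ^k ⊕ ℝ^k` with the Euclidean norm. -/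
abbrev EV (k : ℕ) := EuclideanSpace ℝ (Fin k ⊕ Fin k)

/-- The standard complex structure `J₀ = [[0, -I],[I, 0]]` on `ℝ^{2k}`. -/
def J0 (k : ℕ) : Matrix (Fin k ⊕ Fin k) (Fin k ⊕ Fin k) ℝ :=
  Matrix.fromBlocks 0 (-1) 1 0

/-- Action of a `2k × 2k` real matrix on `ℝ^{2k}`. -/
def matAct {k : ℕ} (A : Matrix (Fin k ⊕ Fin k) (Fin k ⊕ Fin k) ℝ) (v : EV k) : EV k :=
  (EuclideanSpace.equiv (Fin k ⊕ Fin k) ℝ).symm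
    (A.mulVec (EuclideanSpace.equiv (Fin k ⊕ Fin k) ℝ v))

/-- Partial derivative in the first (cylinder) variable `s`. -/
def pS {E : Type*} [NormedAddCommGroup E] [NormedSpace ℝ E] (f : ℝ → ℝ → E) : ℝ → ℝ → E :=
  fun s t => deriv (fun s' => f s' t) s

/-- Partial derivative in the second (angular) variable `t`. -/
def pT {E : Type*} [NormedAddCommGroup E] [NormedSpace ℝ E] (f : ℝ → ℝ → E) : ℝ → ℝ → E :=
  fun s t => deriv (fun t' => f s t') t

/-- The mixed partial derivative `D^γ = ∂_s^{γ₁} ∂_t^{γ₂}` for `γ = (γ₁, γ₂)`. -/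
def Dmix {E : Type*} [NormedAddCommGroup E] [NormedSpace ℝ E] (g₁ g₂ : ℕ) (f : ℝ → ℝ → E) :
    ℝ → ℝ → E :=
  (pS (E := E))^[g₁] ((pT (E := E))^[g₂] f)

/-- `sup_{t ∈ S¹} e^{d·s} ‖g(s,t)‖ → 0` as `s → +∞`. -/
def UnifDecay {E : Type*} [NormedAddCommGroup E] (d : ℝ) (g : ℝ → ℝ → E) : Prop :=
  ∀ ε > 0, ∃ s₀ : ℝ, ∀ s ≥ s₀, ∀ t : ℝ, Real.exp (d * s) * ‖g s t‖ < ε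

/-- `C^n` smoothness on the half cylinder `Z⁺ = [0,∞) × ℝ` (periodicity in `t` is
imposed separately). -/
def SmoothOnZ {E : Type*} [NormedAddCommGroup E] [NormedSpace ℝ E] (n : ℕ∞) (f : ℝ → ℝ → E) :
    Prop :=
  ContDiffOn ℝ n (fun p : ℝ × ℝ => f p.1 p.2) (Ici (0 : ℝ) ×ˢ univ)


open MeasureTheory intervalIntegral
open scoped Topology RealInnerProductSpace

namespace Stmt7Aux

def U : Set (ℝ × ℝ) := Ioi (0:ℝ) ×ˢ (univ : Set ℝ)

lemma isOpen_U : IsOpen U := isOpen_Ioi.prod isOpen_univ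

lemma mem_U {s t : ℝ} (hs : 0 < s) : ((s, t) : ℝ × ℝ) ∈ U := ⟨hs, mem_univ _⟩

variable {E : Type*} [NormedAddCommGroup E] [NormedSpace ℝ E]

/-- directional partial derivatives of an uncurried function -/
def dS (F : ℝ × ℝ → E) : ℝ × ℝ → E := fun p => fderiv ℝ F p (1, 0)

def dT (F : ℝ × ℝ → E) : ℝ × ℝ → E := fun p => fderiv ℝ F p (0, 1)

lemma contDiffAt_of_U {F : ℝ × ℝ → E} (hF : ContDiffOn ℝ (⊤:ℕ∞) F U) {p : ℝ × ℝ} (hp : p ∈ U) :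
    ContDiffAt ℝ (⊤:ℕ∞) F p := hF.contDiffAt (isOpen_U.mem_nhds hp)

lemma hasDerivAt_S {F : ℝ × ℝ → E} (hF : ContDiffOn ℝ (⊤:ℕ∞) F U) {s : ℝ} (hs : 0 < s) (t : ℝ) :
    HasDerivAt (fun s' => F (s', t)) (dS F (s, t)) s := by
  have h1 : HasDerivAt (fun s' : ℝ => ((s', t) : ℝ × ℝ)) (1, 0) s :=
    (hasDerivAt_id s).prodMk (hasDerivAt_const s t)
  have h2 : HasFDerivAt F (fderiv ℝ F (s, t)) (s, t) :=
    ((contDiffAt_of_U hF (mem_U hs)).differentiableAt (by simp)).hasFDerivAt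
  exact h2.comp_hasDerivAt s h1

lemma hasDerivAt_T {F : ℝ × ℝ → E} (hF : ContDiffOn ℝ (⊤:ℕ∞) F U) {s : ℝ} (hs : 0 < s) (t : ℝ) :
    HasDerivAt (fun t' => F (s, t')) (dT F (s, t)) t := by
  have h1 : HasDerivAt (fun t' : ℝ => ((s, t') : ℝ × ℝ)) (0, 1) t :=
    (hasDerivAt_const t s).prodMk (hasDerivAt_id t)
  have h2 : HasFDerivAt F (fderiv ℝ F (s, t)) (s, t) :=
    ((contDiffAt_of_U hF (mem_U hs)).differentiableAt (by simp)).hasFDerivAt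
  exact h2.comp_hasDerivAt t h1

lemma pS_eq {f : ℝ → ℝ → E} (hF : ContDiffOn ℝ (⊤:ℕ∞) (fun p : ℝ × ℝ => f p.1 p.2) U)
    {s : ℝ} (hs : 0 < s) (t : ℝ) :
    pS f s t = dS (fun p : ℝ × ℝ => f p.1 p.2) (s, t) :=
  (hasDerivAt_S hF hs t).deriv

lemma pT_eq {f : ℝ → ℝ → E} (hF : ContDiffOn ℝ (⊤:ℕ∞) (fun p : ℝ × ℝ => f p.1 p.2) U)
    {s : ℝ} (hs : 0 < s) (t : ℝ) :
    pT f s t = dT (fun p : ℝ × ℝ => f p.1 p.2) (s, t) :=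
  (hasDerivAt_T hF hs t).deriv

lemma contDiffOn_dS {F : ℝ × ℝ → E} (hF : ContDiffOn ℝ (⊤:ℕ∞) F U) : ContDiffOn ℝ (⊤:ℕ∞) (dS F) U := by
  have h := ((contDiffOn_infty_iff_fderiv_of_isOpen isOpen_U).1 hF).2
  exact h.clm_apply contDiffOn_const

lemma contDiffOn_dT {F : ℝ × ℝ → E} (hF : ContDiffOn ℝ (⊤:ℕ∞) F U) : ContDiffOn ℝ (⊤:ℕ∞) (dT F) U := by
  have h := ((contDiffOn_infty_iff_fderiv_of_isOpen isOpen_U).1 hF).2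
  exact h.clm_apply contDiffOn_const

lemma symm_dST {F : ℝ × ℝ → E} (hF : ContDiffOn ℝ (⊤:ℕ∞) F U) {p : ℝ × ℝ} (hp : p ∈ U) :
    dT (dS F) p = dS (dT F) p := by
  have hd : ∀ᶠ y in 𝓝 p, HasFDerivAt F (fderiv ℝ F y) y := by
    filter_upwards [isOpen_U.mem_nhds hp] with y hy using
      ((contDiffAt_of_U hF hy).differentiableAt (by simp)).hasFDerivAt
  have hdf : DifferentiableAt ℝ (fderiv ℝ F) p := by
    have h := ((contDiffOn_infty_iff_fderiv_of_isOpen isOpen_U).1 hF).2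
    exact (h.contDiffAt (isOpen_U.mem_nhds hp)).differentiableAt (by simp)
  have hsymm := second_derivative_symmetric_of_eventually hd hdf.hasFDerivAt
  have e1 : ∀ v w : ℝ × ℝ, fderiv ℝ (fun q => fderiv ℝ F q v) p w
      = fderiv ℝ (fderiv ℝ F) p w v := by
    intro v w
    have : fderiv ℝ (fun q => fderiv ℝ F q v) p
        = (fderiv ℝ (fderiv ℝ F) p).flip v + (fderiv ℝ F p).comp (0 : (ℝ×ℝ) →L[ℝ] (ℝ×ℝ)) := by
      simpa using fderiv_clm_apply hdf (differentiableAt_const v)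
    rw [this]; simp
  show fderiv ℝ (fun q => fderiv ℝ F q (1,0)) p (0,1)
      = fderiv ℝ (fun q => fderiv ℝ F q (0,1)) p (1,0)
  rw [e1, e1]
  exact hsymm _ _

lemma contOn_slice {F : ℝ × ℝ → E} (hF : ContinuousOn F U) {s : ℝ} (hs : 0 < s) :
    Continuous fun t => F (s, t) := by
  apply hF.comp_continuous (continuous_const.prodMk continuous_id)
  exact fun t => mem_U hs



lemma hasDerivAt_intervalIntegral {G G' : ℝ → ℝ → ℝ}
    (hG' : ContinuousOn (fun p : ℝ × ℝ => G' p.1 p.2) U)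
    (hGsl : ∀ s, 0 < s → Continuous (fun t => G s t))
    (hd : ∀ s, 0 < s → ∀ t, HasDerivAt (fun s' => G s' t) (G' s t) s)
    {s : ℝ} (hs : 0 < s) :
    HasDerivAt (fun s' => ∫ t in (0:ℝ)..1, G s' t) (∫ t in (0:ℝ)..1, G' s t) s := by
  set K : Set (ℝ × ℝ) := Icc (s/2) (3*s/2) ×ˢ Icc (0:ℝ) 1 with hK
  have hKU : K ⊆ U := by
    rintro ⟨x, t⟩ ⟨hx, ht⟩
    exact ⟨lt_of_lt_of_le (by linarith) hx.1, mem_univ _⟩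
  have hKc : IsCompact K := isCompact_Icc.prod isCompact_Icc
  obtain ⟨C, hC⟩ := hKc.exists_bound_of_continuousOn (hG'.mono hKU)
  have hball : ∀ x ∈ Metric.ball s (s/2), 0 < x ∧ x ∈ Icc (s/2) (3*s/2) := by
    intro x hx
    rw [Metric.mem_ball, Real.dist_eq, abs_lt] at hx
    constructor
    · linarith [hx.1]
    · constructor <;> linarith [hx.1, hx.2]
  refine (intervalIntegral.hasDerivAt_integral_of_dominated_loc_of_deriv_le
    (F := fun x t => G x t) (F' := fun x t => G' x t) (bound := fun _ => C)
    (Metric.ball_mem_nhds s (half_pos hs)) ?_ ?_ ?_ ?_ ?_ ?_).2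
  · filter_upwards [eventually_gt_nhds hs] with x hx
      using (hGsl x hx).aestronglyMeasurable
  · exact (hGsl s hs).intervalIntegrable 0 1
  · exact ((contOn_slice hG' hs)).aestronglyMeasurable
  · refine Eventually.of_forall fun t ht => fun x hx => ?_
    have hxm := hball x hx
    rw [uIoc_of_le (by norm_num : (0:ℝ) ≤ 1)] at ht
    exact hC (x, t) ⟨hxm.2, ⟨le_of_lt ht.1, ht.2⟩⟩
  · exact intervalIntegrable_const
  · refine Eventually.of_forall fun t _ => fun x hx => hd x (hball x hx).1 t

lemma mono_aux {s₀ : ℝ} {g g' : ℝ → ℝ} (hg : ∀ s ≥ s₀, HasDerivAt g (g' s) s)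
    (hg' : ∀ s ≥ s₀, 0 ≤ g' s) : MonotoneOn g (Ici s₀) := by
  apply monotoneOn_of_deriv_nonneg (convex_Ici s₀)
  · exact fun x hx => (hg x hx).continuousAt.continuousWithinAt
  · intro x hx
    rw [interior_Ici] at hx
    exact (hg x hx.le).differentiableAt.differentiableWithinAt
  · intro x hx
    rw [interior_Ici] at hx
    rw [(hg x hx.le).deriv]
    exact hg' x hx.le

lemma hasDerivAt_exp_mul (c u : ℝ) :
    HasDerivAt (fun v : ℝ => Real.exp (c * v)) (c * Real.exp (c * u)) u := by
  simpa [mul_comm, Function.comp_def] using (Real.hasDerivAt_exp (c * u)).comp u ((hasDerivAt_id u).const_mul c)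

lemma ode_comparison {c : ℝ} (hc : 0 < c) {s₀ : ℝ} {w W W' : ℝ → ℝ}
    (hw : ∀ s ≥ s₀, HasDerivAt w (W s) s) (hW : ∀ s ≥ s₀, HasDerivAt W (W' s) s)
    (hineq : ∀ s ≥ s₀, c ^ 2 * w s ≤ W' s) (h0 : w s₀ ≤ 0)
    (hlim : Tendsto w atTop (nhds 0)) : ∀ s ≥ s₀, w s ≤ 0 := by
  set p : ℝ → ℝ := fun s => W s + c * w s with hp
  have hclaim : ∀ σ ≥ s₀, p σ ≤ 0 := by
    intro σ hσ
    by_contra hpos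
    push_neg at hpos
    set L : ℝ := Real.exp (-c * σ) * p σ with hL
    have hLpos : 0 < L := mul_pos (Real.exp_pos _) hpos
    have hqd : ∀ s ≥ σ, HasDerivAt (fun u => Real.exp (-c * u) * p u)
        (Real.exp (-c * s) * (W' s + c * W s) + (-c * Real.exp (-c * s)) * p s) s := by
      intro s hs
      have h1 := hasDerivAt_exp_mul (-c) s
      have h2 : HasDerivAt p (W' s + c * W s) s :=
        (hW s (le_trans hσ hs)).add ((hw s (le_trans hσ hs)).const_mul c)
      exact (h1.mul h2).congr_deriv (by ring)
    have hqmono : MonotoneOn (fun u => Real.exp (-c * u) * p u) (Ici σ) := by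
      apply mono_aux hqd
      intro s hs
      have heq : Real.exp (-c * s) * (W' s + c * W s) + (-c * Real.exp (-c * s)) * p s
          = Real.exp (-c * s) * (W' s - c ^ 2 * w s) := by rw [hp]; ring
      rw [heq]
      exact mul_nonneg (Real.exp_nonneg _) (by linarith [hineq s (le_trans hσ hs)])
    have hpgrow : ∀ s ≥ σ, Real.exp (c * s) * L ≤ p s := by
      intro s hs
      have h := hqmono self_mem_Ici hs hs
      calc Real.exp (c * s) * L ≤ Real.exp (c * s) * (Real.exp (-c * s) * p s) :=
            mul_le_mul_of_nonneg_left h (Real.exp_nonneg _)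
        _ = p s := by rw [← mul_assoc, ← Real.exp_add]; simp
    -- W is eventually ≥ 1
    have hWlarge : ∀ᶠ u in atTop, 1 ≤ W u := by
      have h1 : Tendsto (fun u : ℝ => Real.exp (c * u) * L) atTop atTop :=
        (Real.tendsto_exp_atTop.comp (tendsto_id.const_mul_atTop hc)).atTop_mul_const hLpos
      filter_upwards [h1.eventually_ge_atTop (1 + c), hlim.eventually
        (eventually_lt_nhds zero_lt_one), hlim.eventually (eventually_gt_nhds neg_one_lt_zero),
        eventually_ge_atTop σ] with u h1u h2u h3u h4u
      have := hpgrow u h4u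
      have : W u = p u - c * w u := by rw [hp]; ring
      rw [this]
      nlinarith
    obtain ⟨u₀, hu₀σ, hu₀W⟩ : ∃ u₀, σ ≤ u₀ ∧ ∀ u ≥ u₀, 1 ≤ W u := by
      obtain ⟨u₁, hu₁⟩ := eventually_atTop.1 hWlarge
      exact ⟨max σ u₁, le_max_left _ _, fun u hu => hu₁ u (le_trans (le_max_right _ _) hu)⟩
    -- w u ≥ w u₀ + (u - u₀) for u ≥ u₀ : contradiction with w → 0
    have hmono : MonotoneOn (fun u => w u - u) (Ici u₀) := by
      apply mono_aux (g' := fun u => W u - 1)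
      · exact fun u hu => ((hw u (le_trans hσ (le_trans hu₀σ hu))).sub (hasDerivAt_id u))
      · exact fun u hu => by linarith [hu₀W u hu]
    have hgrow : ∀ u ≥ u₀, w u₀ + (u - u₀) ≤ w u := by
      intro u hu
      have := hmono self_mem_Ici hu hu
      simp only at this
      linarith
    have h1 : Tendsto (fun u : ℝ => w u₀ + (u - u₀)) atTop atTop := by
      apply tendsto_atTop_add_const_left
      exact tendsto_atTop_add_const_right _ _ tendsto_id
    obtain ⟨u, hu1, hu2, hu3⟩ := ((h1.eventually_ge_atTop 1).and
      ((hlim.eventually (eventually_lt_nhds zero_lt_one)).and (eventually_ge_atTop u₀))).exists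
    exact absurd (le_trans hu1 (hgrow u hu3)) (by linarith)
  -- second part
  intro s hs
  have hgd : ∀ u ≥ s₀, HasDerivAt (fun v => -(Real.exp (c * v) * w v))
      (-(Real.exp (c * u) * W u + c * Real.exp (c * u) * w u)) u := by
    intro u hu
    exact (((hasDerivAt_exp_mul c u).mul (hw u hu)).congr_deriv (by ring)).neg
  have hmono : MonotoneOn (fun v => -(Real.exp (c * v) * w v)) (Ici s₀) := by
    apply mono_aux hgd
    intro u hu
    have : -(Real.exp (c * u) * W u + c * Real.exp (c * u) * w u)
        = Real.exp (c * u) * (-p u) := by rw [hp]; ring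
    rw [this]
    exact mul_nonneg (Real.exp_nonneg _) (by linarith [hclaim u hu])
  have h := hmono self_mem_Ici hs hs
  simp only [neg_le_neg_iff] at h
  have h2 : Real.exp (c * s) * w s ≤ Real.exp (c * s₀) * w s₀ := by linarith
  nlinarith [Real.exp_pos (c * s), Real.exp_pos (c * s₀), mul_nonpos_of_nonneg_of_nonpos
    (Real.exp_nonneg (c * s₀)) h0]

section Poincare

variable {F : Type*} [NormedAddCommGroup F] [InnerProductSpace ℝ F] [CompleteSpace F]

lemma poincare {u u' : ℝ → F} (hu : ∀ t, HasDerivAt u (u' t) t) (hc : Continuous u')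
    (hmean : (∫ t in (0:ℝ)..1, u t) = 0) :
    (∫ t in (0:ℝ)..1, ‖u t‖ ^ 2) ≤ ∫ t in (0:ℝ)..1, ‖u' t‖ ^ 2 := by
  have hcu : Continuous u := by
    have : Differentiable ℝ u := fun t => (hu t).differentiableAt
    exact this.continuous
  set M : ℝ := ∫ x in (0:ℝ)..1, ‖u' x‖ with hM
  have hMnn : 0 ≤ M := intervalIntegral.integral_nonneg zero_le_one (fun x _ => norm_nonneg _)
  -- pointwise bound ‖u t‖ ≤ M on [0,1]
  have hbd : ∀ t ∈ Icc (0:ℝ) 1, ‖u t‖ ≤ M := by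
    intro t ht
    have key : ∀ r ∈ Icc (0:ℝ) 1, ‖u t - u r‖ ≤ M := by
      intro r hr
      have hftc : ∫ x in r..t, u' x = u t - u r :=
        intervalIntegral.integral_eq_sub_of_hasDerivAt (fun x _ => hu x)
          (hc.intervalIntegrable r t)
      rw [← hftc]
      refine le_trans (intervalIntegral.norm_integral_le_abs_integral_norm) ?_
      rcases le_total r t with hrt | htr
      · rw [abs_of_nonneg (intervalIntegral.integral_nonneg hrt (fun x _ => norm_nonneg _))]
        exact intervalIntegral.integral_mono_interval hr.1 hrt ht.2
          (Eventually.of_forall fun x => norm_nonneg _) (hc.norm.intervalIntegrable 0 1)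
      · rw [intervalIntegral.integral_symm, abs_neg,
          abs_of_nonneg (intervalIntegral.integral_nonneg htr (fun x _ => norm_nonneg _))]
        exact intervalIntegral.integral_mono_interval ht.1 htr hr.2
          (Eventually.of_forall fun x => norm_nonneg _) (hc.norm.intervalIntegrable 0 1)
    have hrep : u t = ∫ r in (0:ℝ)..1, (u t - u r) := by
      rw [intervalIntegral.integral_sub (intervalIntegrable_const) (hcu.intervalIntegrable 0 1),
        hmean, intervalIntegral.integral_const]
      simp
    calc ‖u t‖ = ‖∫ r in (0:ℝ)..1, (u t - u r)‖ := by rw [← hrep]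
      _ ≤ ∫ r in (0:ℝ)..1, ‖u t - u r‖ :=
          intervalIntegral.norm_integral_le_integral_norm zero_le_one
      _ ≤ ∫ r in (0:ℝ)..1, M := by
          apply intervalIntegral.integral_mono_on (f := fun r => ‖u t - u r‖)
            (g := fun _ => M) zero_le_one
            ((continuous_const.sub hcu).norm.intervalIntegrable 0 1)
            intervalIntegrable_const
          intro r hr
          simpa [norm_sub_rev] using key r hr
      _ = M := by simp
  -- Cauchy-Schwarz : M ^ 2 ≤ ∫ ‖u'‖²
  have hCS : M ^ 2 ≤ ∫ x in (0:ℝ)..1, ‖u' x‖ ^ 2 := by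
    have h0 : 0 ≤ ∫ x in (0:ℝ)..1, (‖u' x‖ - M) ^ 2 :=
      intervalIntegral.integral_nonneg zero_le_one (fun x _ => sq_nonneg _)
    have hexp : ∫ x in (0:ℝ)..1, (‖u' x‖ - M) ^ 2
        = (∫ x in (0:ℝ)..1, ‖u' x‖ ^ 2) - 2 * M * M + M ^ 2 := by
      have h1 : ∀ x, (‖u' x‖ - M) ^ 2 = ‖u' x‖ ^ 2 - (2 * M) * ‖u' x‖ + M ^ 2 := by
        intro x; ring
      simp_rw [h1]
      rw [intervalIntegral.integral_add (f := fun x => ‖u' x‖ ^ 2 - 2 * M * ‖u' x‖) (g := fun _ => M ^ 2) (((hc.norm.pow 2).intervalIntegrable 0 1).sub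
          ((continuous_const.mul hc.norm).intervalIntegrable 0 1)) intervalIntegrable_const,
        intervalIntegral.integral_sub (f := fun x => ‖u' x‖ ^ 2) (g := fun x => 2 * M * ‖u' x‖) ((hc.norm.pow 2).intervalIntegrable 0 1)
          ((continuous_const.mul hc.norm).intervalIntegrable 0 1),
        intervalIntegral.integral_const_mul, intervalIntegral.integral_const]
      simp [← hM]
      try ring
    nlinarith
  calc (∫ t in (0:ℝ)..1, ‖u t‖ ^ 2) ≤ ∫ t in (0:ℝ)..1, M ^ 2 := by
        apply intervalIntegral.integral_mono_on zero_le_one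
          ((hcu.norm.pow 2).intervalIntegrable 0 1) intervalIntegrable_const
        intro t ht
        exact pow_le_pow_left₀ (norm_nonneg _) (hbd t ht) 2
    _ = M ^ 2 := by simp
    _ ≤ _ := hCS

end Poincare

section Jlin

variable {k : ℕ}

def JL (k : ℕ) : EV k →L[ℝ] EV k :=
  LinearMap.toContinuousLinearMap
    ((EuclideanSpace.equiv (Fin k ⊕ Fin k) ℝ).symm.toLinearMap.comp
      ((Matrix.mulVecLin (J0 k)).comp
        (EuclideanSpace.equiv (Fin k ⊕ Fin k) ℝ).toLinearMap))

lemma JL_apply (v : EV k) : JL k v = matAct (J0 k) v := rfl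

lemma J0_mul_J0 : (J0 k) * (J0 k) = -1 := by
  rw [J0, Matrix.fromBlocks_multiply,
    show (-1 : Matrix (Fin k ⊕ Fin k) (Fin k ⊕ Fin k) ℝ)
      = Matrix.fromBlocks (-1) (-0) (-0) (-1) from by
        rw [← Matrix.fromBlocks_neg, Matrix.fromBlocks_one],
    ]
  congr 1 <;> simp

lemma JL_JL (v : EV k) : JL k (JL k v) = -v := by
  have h : (J0 k).mulVec ((J0 k).mulVec ((EuclideanSpace.equiv (Fin k ⊕ Fin k) ℝ) v))
      = -(EuclideanSpace.equiv (Fin k ⊕ Fin k) ℝ) v := by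
    rw [Matrix.mulVec_mulVec, J0_mul_J0, Matrix.neg_mulVec, Matrix.one_mulVec]
  simp only [JL_apply, matAct]
  rw [show (EuclideanSpace.equiv (Fin k ⊕ Fin k) ℝ)
      ((EuclideanSpace.equiv (Fin k ⊕ Fin k) ℝ).symm ((J0 k).mulVec
        ((EuclideanSpace.equiv (Fin k ⊕ Fin k) ℝ) v)))
      = (J0 k).mulVec ((EuclideanSpace.equiv (Fin k ⊕ Fin k) ℝ) v) from
    (EuclideanSpace.equiv (Fin k ⊕ Fin k) ℝ).apply_symm_apply _, h]
  simp
  rfl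

lemma J0_mulVec (x : Fin k ⊕ Fin k → ℝ) :
    (J0 k).mulVec x = Sum.elim (fun i => -x (Sum.inr i)) (fun i => x (Sum.inl i)) := by
  have hx : x = Sum.elim (x ∘ Sum.inl) (x ∘ Sum.inr) := (Sum.elim_comp_inl_inr x).symm
  rw [J0, hx, Matrix.fromBlocks_mulVec]
  simp [Matrix.neg_mulVec, Matrix.one_mulVec]
  rfl

lemma JL_norm (v : EV k) : ‖JL k v‖ = ‖v‖ := by
  rw [EuclideanSpace.norm_eq, EuclideanSpace.norm_eq]
  congr 1
  have happ : ∀ j, (JL k v) j = ((J0 k).mulVec ((EuclideanSpace.equiv (Fin k ⊕ Fin k) ℝ) v)) j :=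
    fun j => rfl
  simp_rw [happ, J0_mulVec]
  rw [Fintype.sum_sum_type, Fintype.sum_sum_type]
  simp [add_comm]

end Jlin

section Core

lemma young {a x y : ℝ} (ha : 0 < a) : 2 * (x * y) ≤ a * x ^ 2 + (1 / a) * y ^ 2 := by
  have h : a * x ^ 2 + (1 / a) * y ^ 2 - 2 * (x * y) = (1 / a) * (a * x - y) ^ 2 := by
    field_simp
    ring
  nlinarith [mul_nonneg (le_of_lt (one_div_pos.2 ha)) (sq_nonneg (a * x - y))]

variable {k : ℕ}

set_option maxHeartbeats 2000000 in
lemma core (k : ℕ) (d : ℝ) (hd0 : 0 < d) (hd : d < 1 / 2)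
    (X h : ℝ → ℝ → EV k)
    (hXper : ∀ s t, X s (t + 1) = X s t)
    (hXsmooth : ContDiffOn ℝ (⊤:ℕ∞) (fun p : ℝ × ℝ => X p.1 p.2) (Ici (0:ℝ) ×ˢ univ))
    (hhsmooth : ContDiffOn ℝ (⊤:ℕ∞) (fun p : ℝ × ℝ => h p.1 p.2) (Ici (0:ℝ) ×ˢ univ))
    (hPDE : ∀ s, 0 ≤ s → ∀ t, pS X s t + matAct (J0 k) (pT X s t) = h s t)
    (hhdecay : ∀ g₁ g₂ : ℕ, UnifDecay d (Dmix g₁ g₂ h))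
    (hmean : ∀ s, 0 ≤ s → (∫ t in (0:ℝ)..1, X s t) = 0) :
    ∃ Y1 Y2 : ℝ → ℝ,
      (∀ s, 0 < s → HasDerivAt (fun s' => ∫ t in (0:ℝ)..1, ‖X s' t‖ ^ 2) (Y1 s) s) ∧
      (∀ s, 0 < s → HasDerivAt Y1 (Y2 s) s) ∧
      (∀ ε > 0, ∃ s₀ : ℝ, 1 ≤ s₀ ∧ ∀ s ≥ s₀,
        ((1 + (2*d)^2)/2) * (∫ t in (0:ℝ)..1, ‖X s t‖ ^ 2) - ε * Real.exp (-(2*d) * s)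
          ≤ Y2 s) := by
  have hUsub : U ⊆ Ici (0:ℝ) ×ˢ (univ : Set ℝ) :=
    Set.prod_mono_left Ioi_subset_Ici_self
  set XX : ℝ × ℝ → EV k := fun p => X p.1 p.2 with hXX
  set HH : ℝ × ℝ → EV k := fun p => h p.1 p.2 with hHH
  have hXU : ContDiffOn ℝ (⊤:ℕ∞) XX U := hXsmooth.mono hUsub
  have hHU : ContDiffOn ℝ (⊤:ℕ∞) HH U := hhsmooth.mono hUsub
  set X1 : ℝ × ℝ → EV k := dS XX with hX1def
  set X2 : ℝ × ℝ → EV k := dT XX with hX2def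
  have hX1U : ContDiffOn ℝ (⊤:ℕ∞) X1 U := contDiffOn_dS hXU
  have hX2U : ContDiffOn ℝ (⊤:ℕ∞) X2 U := contDiffOn_dT hXU
  set X11 : ℝ × ℝ → EV k := dS X1 with hX11def
  set X12 : ℝ × ℝ → EV k := dT X1 with hX12def
  set X21 : ℝ × ℝ → EV k := dS X2 with hX21def
  set H1 : ℝ × ℝ → EV k := dS HH with hH1def
  have hX12U : ContDiffOn ℝ (⊤:ℕ∞) X12 U := contDiffOn_dT hX1U
  have cXX : ContinuousOn XX U := hXU.continuousOn
  have cX1 : ContinuousOn X1 U := hX1U.continuousOn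
  have cX2 : ContinuousOn X2 U := hX2U.continuousOn
  have cX11 : ContinuousOn X11 U := (contDiffOn_dS hX1U).continuousOn
  have cX12 : ContinuousOn X12 U := hX12U.continuousOn
  have cHH : ContinuousOn HH U := hHU.continuousOn
  have cH1 : ContinuousOn H1 U := (contDiffOn_dS hHU).continuousOn
  -- curried PDE
  have hPDE' : ∀ s, 0 < s → ∀ t, X1 (s, t) + JL k (X2 (s, t)) = h s t := by
    intro s hs t
    have := hPDE s hs.le t
    rwa [pS_eq hXU hs t, pT_eq hXU hs t, ← JL_apply] at this
  -- differentiated PDE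
  have hPDEs : ∀ s, 0 < s → ∀ t, X11 (s, t) + JL k (X12 (s, t)) = H1 (s, t) := by
    intro s hs t
    have hder : HasDerivAt (fun s' => X1 (s', t) + JL k (X2 (s', t)))
        (X11 (s, t) + JL k (X21 (s, t))) s :=
      (hasDerivAt_S hX1U hs t).add
        ((JL k).hasFDerivAt.comp_hasDerivAt s (hasDerivAt_S hX2U hs t))
    have hEq : (fun s' => h s' t) =ᶠ[𝓝 s] fun s' => X1 (s', t) + JL k (X2 (s', t)) := by
      filter_upwards [eventually_gt_nhds hs] with s' hs' using (hPDE' s' hs' t).symm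
    have hder2 : HasDerivAt (fun s' => h s' t) (X11 (s, t) + JL k (X21 (s, t))) s :=
      hder.congr_of_eventuallyEq hEq
    have hsymm : X21 (s, t) = X12 (s, t) := (symm_dST hXU (mem_U hs)).symm
    rw [← hsymm]
    exact hder2.unique (hasDerivAt_S hHU hs t)
  -- periodicity of X1 in t (only t = 0,1 needed)
  have hX1per : ∀ s, 0 < s → X1 (s, 1) = X1 (s, 0) := by
    intro s hs
    have h1 : HasDerivAt (fun s' => X s' 1) (X1 (s, 1)) s := hasDerivAt_S hXU hs 1
    have h0 : HasDerivAt (fun s' => X s' 0) (X1 (s, 0)) s := hasDerivAt_S hXU hs 0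
    have hfe : (fun s' => X s' 1) = fun s' => X s' 0 := by
      funext s'
      simpa using hXper s' 0
    rw [hfe] at h1
    exact h1.unique h0
  -- the first derivative
  refine ⟨fun s => ∫ t in (0:ℝ)..1, (⟪X s t, X1 (s, t)⟫ + ⟪X1 (s, t), X s t⟫),
    fun s => ∫ t in (0:ℝ)..1,
      ((⟪X s t, X11 (s, t)⟫ + ⟪X1 (s, t), X1 (s, t)⟫)
        + (⟪X1 (s, t), X1 (s, t)⟫ + ⟪X11 (s, t), X s t⟫)), ?_, ?_, ?_⟩
  · intro s hs
    apply hasDerivAt_intervalIntegral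
      (G' := fun s t => ⟪X s t, X1 (s, t)⟫ + ⟪X1 (s, t), X s t⟫)
    · exact ((cXX.inner cX1).add (cX1.inner cXX))
    · intro s' hs'
      exact ((contOn_slice cXX hs').norm.pow 2)
    · intro s' hs' t
      have hder := (hasDerivAt_S hXU hs' t).inner ℝ (hasDerivAt_S hXU hs' t)
      have hfe : (fun s'' => ‖X s'' t‖ ^ 2) = fun s'' => (⟪X s'' t, X s'' t⟫ : ℝ) :=
        funext fun s'' => (real_inner_self_eq_norm_sq _).symm
      rw [hfe]
      exact hder
    · exact hs
  · intro s hs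
    apply hasDerivAt_intervalIntegral
      (G' := fun s t => (⟪X s t, X11 (s, t)⟫ + ⟪X1 (s, t), X1 (s, t)⟫)
        + (⟪X1 (s, t), X1 (s, t)⟫ + ⟪X11 (s, t), X s t⟫))
    · exact ((cXX.inner cX11).add (cX1.inner cX1)).add ((cX1.inner cX1).add (cX11.inner cXX))
    · intro s' hs'
      exact ((contOn_slice cXX hs').inner (contOn_slice cX1 hs')).add
        ((contOn_slice cX1 hs').inner (contOn_slice cXX hs'))
    · intro s' hs' t
      exact ((hasDerivAt_S hXU hs' t).inner ℝ (hasDerivAt_S hX1U hs' t)).add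
        ((hasDerivAt_S hX1U hs' t).inner ℝ (hasDerivAt_S hXU hs' t))
    · exact hs
  · -- the estimate
    intro ε hε
    set a : ℝ := (1 - (2*d)^2)/2 with hadef
    have hd1 : 2*d < 1 := by linarith
    have ha : 0 < a := by nlinarith [hd0]
    set δ : ℝ := Real.sqrt (ε/2) with hδdef
    set δ' : ℝ := Real.sqrt (a*ε/2) with hδ'def
    have hδpos : 0 < δ := Real.sqrt_pos.2 (by linarith)
    have hδ'pos : 0 < δ' := Real.sqrt_pos.2 (by positivity)
    have hh0 : UnifDecay d h := by simpa [Dmix] using hhdecay 0 0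
    have hh1 : UnifDecay d (pS h) := by simpa [Dmix] using hhdecay 1 0
    obtain ⟨s₁, hs₁⟩ := hh0 δ hδpos
    obtain ⟨s₂, hs₂⟩ := hh1 δ' hδ'pos
    refine ⟨max 1 (max s₁ s₂), le_max_left _ _, ?_⟩
    intro s hs
    have hs1 : (1:ℝ) ≤ s := le_trans (le_max_left _ _) hs
    have hs0 : 0 < s := lt_of_lt_of_le one_pos hs1
    set E : ℝ := Real.exp (-d * s) with hEdef
    have hEpos : 0 < E := Real.exp_pos _
    have hEinv : E * Real.exp (d * s) = 1 := by
      rw [hEdef, ← Real.exp_add, neg_mul, neg_add_cancel, Real.exp_zero]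
    have hhbd : ∀ t, ‖h s t‖ ≤ δ * E := by
      intro t
      have h1 := (hs₁ s (le_trans (le_trans (le_max_left s₁ s₂) (le_max_right 1 _)) hs) t).le
      calc ‖h s t‖ = E * (Real.exp (d * s) * ‖h s t‖) := by
            rw [← mul_assoc, hEinv, one_mul]
        _ ≤ E * δ := mul_le_mul_of_nonneg_left h1 hEpos.le
        _ = δ * E := mul_comm _ _
    have hH1bd : ∀ t, ‖H1 (s, t)‖ ≤ δ' * E := by
      intro t
      have h1 := (hs₂ s (le_trans (le_trans (le_max_right s₁ s₂) (le_max_right 1 _)) hs) t).le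
      rw [pS_eq hHU hs0 t] at h1
      calc ‖H1 (s, t)‖ = E * (Real.exp (d * s) * ‖H1 (s, t)‖) := by
            rw [← mul_assoc, hEinv, one_mul]
        _ ≤ E * δ' := mul_le_mul_of_nonneg_left h1 hEpos.le
        _ = δ' * E := mul_comm _ _
    -- continuity of slices
    have cXs : Continuous fun t => X s t := contOn_slice cXX hs0
    have cX1s : Continuous fun t => X1 (s, t) := contOn_slice cX1 hs0
    have cX2s : Continuous fun t => X2 (s, t) := contOn_slice cX2 hs0
    have cX11s : Continuous fun t => X11 (s, t) := contOn_slice cX11 hs0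
    have cX12s : Continuous fun t => X12 (s, t) := contOn_slice cX12 hs0
    have cH1s : Continuous fun t => H1 (s, t) := contOn_slice cH1 hs0
    have chs : Continuous fun t => h s t := contOn_slice cHH hs0
    -- pointwise PDE identities
    have hx11 : ∀ t, X11 (s, t) = H1 (s, t) - JL k (X12 (s, t)) :=
      fun t => eq_sub_of_add_eq (hPDEs s hs0 t)
    have hx1 : ∀ t, X1 (s, t) = h s t - JL k (X2 (s, t)) :=
      fun t => eq_sub_of_add_eq (hPDE' s hs0 t)
    -- boundary term
    set Phi : ℝ → ℝ := fun t => ⟪X s t, JL k (X1 (s, t))⟫ with hPhidef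
    set DPhi : ℝ → ℝ := fun t =>
      ⟪X s t, JL k (X12 (s, t))⟫ + ⟪X2 (s, t), JL k (X1 (s, t))⟫ with hDPhidef
    have hPhi : ∀ t, HasDerivAt Phi (DPhi t) t := fun t =>
      (hasDerivAt_T hXU hs0 t).inner ℝ
        ((JL k).hasFDerivAt.comp_hasDerivAt t (hasDerivAt_T hX1U hs0 t))
    have cDPhi : Continuous DPhi :=
      (cXs.inner ((JL k).continuous.comp cX12s)).add
        (cX2s.inner ((JL k).continuous.comp cX1s))
    have hPhiInt : (∫ t in (0:ℝ)..1, DPhi t) = 0 := by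
      rw [intervalIntegral.integral_eq_sub_of_hasDerivAt (fun t _ => hPhi t)
        (cDPhi.intervalIntegrable 0 1)]
      have hX10 : X s 1 = X s 0 := by simpa using hXper s 0
      rw [hPhidef]
      simp only [hX10, hX1per s hs0, sub_self]
    -- main integrand
    set Gm : ℝ → ℝ := fun t => 2*‖X1 (s, t)‖^2 + 2*‖X2 (s, t)‖^2
      + 2*⟪X s t, H1 (s, t)⟫ + 2*⟪X2 (s, t), JL k (h s t)⟫ with hGmdef
    have cGm : Continuous Gm := by
      apply Continuous.add
      apply Continuous.add
      apply Continuous.add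
      · exact continuous_const.mul (cX1s.norm.pow 2)
      · exact continuous_const.mul (cX2s.norm.pow 2)
      · exact continuous_const.mul (cXs.inner cH1s)
      · exact continuous_const.mul (cX2s.inner ((JL k).continuous.comp chs))
    -- pointwise identity:  original integrand = Gm - 2 * DPhi
    have hpoint : ∀ t, ((⟪X s t, X11 (s, t)⟫ + ⟪X1 (s, t), X1 (s, t)⟫)
        + (⟪X1 (s, t), X1 (s, t)⟫ + ⟪X11 (s, t), X s t⟫)) = Gm t - 2 * DPhi t := by
      intro t
      have hA : ⟪X s t, X11 (s, t)⟫ = ⟪X s t, H1 (s, t)⟫ - ⟪X s t, JL k (X12 (s, t))⟫ := by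
        rw [hx11 t, inner_sub_right]
      have hA' : (⟪X11 (s, t), X s t⟫ : ℝ) = ⟪X s t, X11 (s, t)⟫ := real_inner_comm _ _
      have hB : (⟪X2 (s, t), JL k (X1 (s, t))⟫ : ℝ)
          = ⟪X2 (s, t), JL k (h s t)⟫ + ‖X2 (s, t)‖^2 := by
        rw [hx1 t, map_sub, JL_JL, sub_neg_eq_add, inner_add_right, real_inner_self_eq_norm_sq]
      have hC : (⟪X1 (s, t), X1 (s, t)⟫ : ℝ) = ‖X1 (s, t)‖^2 := real_inner_self_eq_norm_sq _
      rw [hGmdef, hDPhidef]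
      simp only
      rw [hA', hA, hB, hC]
      ring
    -- rewrite the integral
    have hY2eq : (∫ t in (0:ℝ)..1,
        ((⟪X s t, X11 (s, t)⟫ + ⟪X1 (s, t), X1 (s, t)⟫)
        + (⟪X1 (s, t), X1 (s, t)⟫ + ⟪X11 (s, t), X s t⟫)))
        = ∫ t in (0:ℝ)..1, Gm t := by
      rw [intervalIntegral.integral_congr (g := fun t => Gm t - 2 * DPhi t)
        (fun t _ => hpoint t)]
      rw [intervalIntegral.integral_sub (g := fun t => 2 * DPhi t) (cGm.intervalIntegrable 0 1)
        ((continuous_const.mul cDPhi).intervalIntegrable 0 1),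
        intervalIntegral.integral_const_mul, hPhiInt]
      ring
    show ((1 + (2*d)^2)/2) * (∫ t in (0:ℝ)..1, ‖X s t‖ ^ 2) - ε * Real.exp (-(2*d) * s)
      ≤ ∫ t in (0:ℝ)..1, ((⟪X s t, X11 (s, t)⟫ + ⟪X1 (s, t), X1 (s, t)⟫)
        + (⟪X1 (s, t), X1 (s, t)⟫ + ⟪X11 (s, t), X s t⟫))
    rw [hY2eq]
    -- lower bound the integrand
    have hEsq : Real.exp (-(2*d) * s) = E^2 := by
      rw [hEdef, ← Real.exp_nat_mul]
      norm_num
      ring_nf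
    have e1 : (1/a)*(δ'*E)^2 = (ε/2)*E^2 := by
      rw [mul_pow, hδ'def, Real.sq_sqrt (by positivity)]
      field_simp
    have e2 : (δ*E)^2 = (ε/2)*E^2 := by
      rw [mul_pow, hδdef, Real.sq_sqrt (by linarith)]
    have hlow : ∀ t ∈ Icc (0:ℝ) 1,
        ‖X2 (s, t)‖^2 - a*‖X s t‖^2 - ε*E^2 ≤ Gm t := by
      intro t _
      have f1 : -(‖X s t‖*‖H1 (s, t)‖) ≤ (⟪X s t, H1 (s, t)⟫ : ℝ) := by
        have := abs_real_inner_le_norm (X s t) (H1 (s, t))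
        have h2 := neg_abs_le (⟪X s t, H1 (s, t)⟫ : ℝ)
        linarith
      have f2 : 2*(‖X s t‖*‖H1 (s, t)‖) ≤ a*‖X s t‖^2 + (1/a)*‖H1 (s, t)‖^2 := young ha
      have f3 : (1/a)*‖H1 (s, t)‖^2 ≤ (ε/2)*E^2 := by
        rw [← e1]
        apply mul_le_mul_of_nonneg_left _ (by positivity)
        exact pow_le_pow_left₀ (norm_nonneg _) (hH1bd t) 2
      have f4 : -(‖X2 (s, t)‖*‖h s t‖) ≤ (⟪X2 (s, t), JL k (h s t)⟫ : ℝ) := by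
        have h1 := abs_real_inner_le_norm (X2 (s, t)) (JL k (h s t))
        rw [JL_norm] at h1
        have h2 := neg_abs_le (⟪X2 (s, t), JL k (h s t)⟫ : ℝ)
        linarith
      have f5 : 2*(‖X2 (s, t)‖*‖h s t‖) ≤ ‖X2 (s, t)‖^2 + ‖h s t‖^2 := by
        nlinarith [sq_nonneg (‖X2 (s, t)‖ - ‖h s t‖)]
      have f6 : ‖h s t‖^2 ≤ (ε/2)*E^2 := by
        rw [← e2]
        exact pow_le_pow_left₀ (norm_nonneg _) (hhbd t) 2
      have f7 : (0:ℝ) ≤ ‖X1 (s, t)‖^2 := sq_nonneg _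
      rw [hGmdef]
      simp only
      linarith
    -- Poincaré
    have hpoin : (∫ t in (0:ℝ)..1, ‖X s t‖^2) ≤ ∫ t in (0:ℝ)..1, ‖X2 (s, t)‖^2 :=
      poincare (fun t => hasDerivAt_T hXU hs0 t) cX2s (hmean s hs0.le)
    -- put the integral estimates together
    have hmono : (∫ t in (0:ℝ)..1, (‖X2 (s, t)‖^2 - a*‖X s t‖^2 - ε*E^2))
        ≤ ∫ t in (0:ℝ)..1, Gm t := by
      apply intervalIntegral.integral_mono_on zero_le_one _ (cGm.intervalIntegrable 0 1) hlow
      exact (((cX2s.norm.pow 2).sub (continuous_const.mul (cXs.norm.pow 2))).sub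
        continuous_const).intervalIntegrable 0 1
    have hsplit : (∫ t in (0:ℝ)..1, (‖X2 (s, t)‖^2 - a*‖X s t‖^2 - ε*E^2))
        = (∫ t in (0:ℝ)..1, ‖X2 (s, t)‖^2) - a*(∫ t in (0:ℝ)..1, ‖X s t‖^2) - ε*E^2 := by
      rw [intervalIntegral.integral_sub (f := fun t => ‖X2 (s, t)‖^2 - a*‖X s t‖^2) (g := fun _ => ε*E^2) (((cX2s.norm.pow 2).sub
          (continuous_const.mul (cXs.norm.pow 2))).intervalIntegrable 0 1) intervalIntegrable_const,
        intervalIntegral.integral_sub (f := fun t => ‖X2 (s, t)‖^2) (g := fun t => a*‖X s t‖^2) ((cX2s.norm.pow 2).intervalIntegrable 0 1)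
          ((continuous_const.mul (cXs.norm.pow 2)).intervalIntegrable 0 1),
        intervalIntegral.integral_const_mul, intervalIntegral.integral_const]
      simp
    rw [hEsq]
    have h1a : (1 + (2*d)^2)/2 = 1 - a := by rw [hadef]; ring
    rw [h1a]
    nlinarith [hmono, hsplit, hpoin]

end Core

end Stmt7Aux

open Stmt7Aux in
set_option maxHeartbeats 1000000 in
/-- STEP 1 of the exponential `L²`-decay lemma: decay for solutions of
`X_s + J₀X_t = h` with vanishing mean. -/
theorem stmt7 (k : ℕ) (d : ℝ) (hd0 : 0 < d) (hd : d < 1 / 2)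
    (X h : ℝ → ℝ → EV k)
    (hXper : ∀ s t, X s (t + 1) = X s t)
    (hXsmooth : SmoothOnZ (⊤ : ℕ∞) X)
    (hhper : ∀ s t, h s (t + 1) = h s t)
    (hhsmooth : SmoothOnZ (⊤ : ℕ∞) h)
    (hPDE : ∀ s, 0 ≤ s → ∀ t, pS X s t + matAct (J0 k) (pT X s t) = h s t)
    (hhdecay : ∀ g₁ g₂ : ℕ, UnifDecay d (Dmix g₁ g₂ h))
    (hXdecay : UnifDecay 0 X)
    (hmean : ∀ s, 0 ≤ s → (∫ t in (0:ℝ)..1, X s t) = 0) :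
    Tendsto (fun s => Real.exp (d * s) * Real.sqrt (∫ t in (0:ℝ)..1, ‖X s t‖ ^ 2))
      atTop (nhds 0) := by
  set YI : ℝ → ℝ := fun s => ∫ t in (0:ℝ)..1, ‖X s t‖ ^ 2 with hYIdef
  have hUsub : U ⊆ Ici (0:ℝ) ×ˢ (univ : Set ℝ) := Set.prod_mono_left Ioi_subset_Ici_self
  have hXU : ContDiffOn ℝ (⊤:ℕ∞) (fun p : ℝ × ℝ => X p.1 p.2) U := hXsmooth.mono hUsub
  have hYnn : ∀ s, 0 ≤ YI s :=
    fun s => intervalIntegral.integral_nonneg zero_le_one (fun t _ => sq_nonneg _)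
  -- YI tends to 0
  have hY0 : Tendsto YI atTop (nhds 0) := by
    rw [Metric.tendsto_atTop]
    intro ε hε
    set δ : ℝ := Real.sqrt ε / 2 with hδdef
    have hδpos : 0 < δ := by positivity
    obtain ⟨s₀, hs₀⟩ := hXdecay δ hδpos
    refine ⟨max s₀ 1, fun s hs => ?_⟩
    have hs0 : 0 < s := lt_of_lt_of_le one_pos (le_trans (le_max_right _ _) hs)
    have hbd : ∀ t, ‖X s t‖ ≤ δ := by
      intro t
      have := (hs₀ s (le_trans (le_max_left _ _) hs) t).le
      simpa using this
    have hXc : Continuous fun t => X s t := contOn_slice hXU.continuousOn hs0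
    have h1 : YI s ≤ δ^2 := by
      calc YI s ≤ ∫ t in (0:ℝ)..1, δ^2 := by
            apply intervalIntegral.integral_mono_on zero_le_one
              ((hXc.norm.pow 2).intervalIntegrable 0 1) intervalIntegrable_const
            exact fun t _ => pow_le_pow_left₀ (norm_nonneg _) (hbd t) 2
        _ = δ^2 := by simp
    have h2 : δ^2 < ε := by
      rw [hδdef, div_pow, Real.sq_sqrt hε.le]
      nlinarith
    rw [Real.dist_eq, abs_of_nonneg (by linarith [hYnn s] : (0:ℝ) ≤ YI s - 0)]
    simpa using lt_of_le_of_lt h1 h2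
  -- core estimate
  obtain ⟨Y1, Y2, hY1, hY2, hest⟩ := core k d hd0 hd X h hXper hXsmooth hhsmooth hPDE hhdecay hmean
  -- constants
  set c2 : ℝ := (1 + (2*d)^2)/2 with hc2def
  have hc2pos : 0 < c2 := by positivity
  set c : ℝ := Real.sqrt c2 with hcdef
  have hcpos : 0 < c := Real.sqrt_pos.2 hc2pos
  have hcsq : c^2 = c2 := Real.sq_sqrt hc2pos.le
  have hmuc : 2*d < c := by
    rw [hcdef]
    rw [show (2*d) = Real.sqrt ((2*d)^2) from (Real.sqrt_sq (by linarith)).symm]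
    apply Real.sqrt_lt_sqrt (sq_nonneg _)
    nlinarith
  set ν : ℝ := (2*d + c)/2 with hνdef
  have hνpos : 0 < ν := by positivity
  have hνlt : ν < c := by rw [hνdef]; linarith
  have hμν : 2*d < ν := by rw [hνdef]; linarith
  have hν2 : ν^2 < c2 := by
    rw [← hcsq]
    nlinarith
  have hμ2 : (2*d)^2 < c2 := by
    rw [← hcsq]
    nlinarith
  -- main convergence
  have key : Tendsto (fun s => Real.exp ((2*d) * s) * YI s) atTop (nhds 0) := by
    rw [Metric.tendsto_atTop]
    intro εf hεf
    set B : ℝ := εf/4 with hBdef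
    have hBpos : 0 < B := by positivity
    set ε' : ℝ := B * (c2 - (2*d)^2) with hε'def
    have hε'pos : 0 < ε' := by
      apply mul_pos hBpos
      linarith
    obtain ⟨s₀, hs₀1, hineq⟩ := hest ε' hε'pos
    set A : ℝ := YI s₀ with hAdef
    have hAnn : 0 ≤ A := hYnn s₀
    set A' : ℝ := A * Real.exp (ν * s₀) with hA'def
    have hA'nn : 0 ≤ A' := mul_nonneg hAnn (Real.exp_nonneg _)
    set v : ℝ → ℝ := fun s => A' * Real.exp (-ν * s) + B * Real.exp (-(2*d) * s) with hvdef
    set w : ℝ → ℝ := fun s => YI s - v s with hwdef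
    set W : ℝ → ℝ := fun s => Y1 s - (A' * (-ν * Real.exp (-ν * s))
      + B * (-(2*d) * Real.exp (-(2*d) * s))) with hWdef
    set W' : ℝ → ℝ := fun s => Y2 s - (A' * (-ν * (-ν * Real.exp (-ν * s)))
      + B * (-(2*d) * (-(2*d) * Real.exp (-(2*d) * s)))) with hW'def
    have hspos : ∀ s : ℝ, s ≥ s₀ → 0 < s := fun s hs => lt_of_lt_of_le one_pos (le_trans hs₀1 hs)
    have hw : ∀ s ≥ s₀, HasDerivAt w (W s) s := by
      intro s hs
      exact (hY1 s (hspos s hs)).sub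
        (((hasDerivAt_exp_mul (-ν) s).const_mul A').add
          ((hasDerivAt_exp_mul (-(2*d)) s).const_mul B))
    have hW : ∀ s ≥ s₀, HasDerivAt W (W' s) s := by
      intro s hs
      exact (hY2 s (hspos s hs)).sub
        ((((hasDerivAt_exp_mul (-ν) s).const_mul (-ν)).const_mul A').add
          (((hasDerivAt_exp_mul (-(2*d)) s).const_mul (-(2*d))).const_mul B))
    have hineq' : ∀ s ≥ s₀, c^2 * w s ≤ W' s := by
      intro s hs
      have h1 := hineq s hs
      have hF : 0 ≤ A' * ((c2 - ν^2) * Real.exp (-ν * s)) :=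
        mul_nonneg hA'nn (mul_nonneg (by linarith) (Real.exp_nonneg _))
      rw [hcsq, hwdef, hW'def, hvdef]
      simp only
      rw [hε'def] at h1
      nlinarith [Real.exp_pos (-ν * s), Real.exp_pos (-(2*d) * s)]
    have h0 : w s₀ ≤ 0 := by
      rw [hwdef, hvdef]
      simp only
      have hAA : A' * Real.exp (-ν * s₀) = A := by
        rw [hA'def, mul_assoc, ← Real.exp_add]
        simp
      rw [hAA, hAdef]
      nlinarith [Real.exp_pos (-(2*d) * s₀)]
    have hv0 : Tendsto v atTop (nhds 0) := by
      rw [hvdef]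
      have t1 : Tendsto (fun s : ℝ => Real.exp (-ν * s)) atTop (nhds 0) := by
        have := Real.tendsto_exp_neg_atTop_nhds_zero.comp (tendsto_id.const_mul_atTop hνpos)
        refine this.congr fun s => ?_
        simp [Function.comp, neg_mul]
      have t2 : Tendsto (fun s : ℝ => Real.exp (-(2*d) * s)) atTop (nhds 0) := by
        have := Real.tendsto_exp_neg_atTop_nhds_zero.comp
          (tendsto_id.const_mul_atTop (by linarith : (0:ℝ) < 2*d))
        refine this.congr fun s => ?_
        simp [Function.comp, neg_mul]
      simpa using (t1.const_mul A').add (t2.const_mul B)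
    have hlim : Tendsto w atTop (nhds 0) := by
      rw [hwdef]
      simpa using hY0.sub hv0
    have hwle := ode_comparison hcpos hw hW hineq' h0 hlim
    -- conclude
    have hA'dec : Tendsto (fun s : ℝ => A' * Real.exp ((2*d - ν) * s)) atTop (nhds 0) := by
      have t1 : Tendsto (fun s : ℝ => Real.exp ((2*d - ν) * s)) atTop (nhds 0) := by
        have := Real.tendsto_exp_neg_atTop_nhds_zero.comp
          (tendsto_id.const_mul_atTop (by linarith : (0:ℝ) < ν - 2*d))
        refine this.congr fun s => ?_
        simp only [Function.comp, id]
        ring_nf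
      simpa using t1.const_mul A'
    obtain ⟨N, hN⟩ := eventually_atTop.1
      ((hA'dec.eventually (eventually_lt_nhds hBpos)).and (eventually_ge_atTop s₀))
    refine ⟨N, fun s hs => ?_⟩
    obtain ⟨hsmall, hss₀⟩ := hN s hs
    have hYle : YI s ≤ v s := by have := hwle s hss₀; rw [hwdef] at this; simpa using this
    have hcalc : Real.exp ((2*d) * s) * v s = A' * Real.exp ((2*d - ν) * s) + B := by
      rw [hvdef]
      simp only
      have e1 : Real.exp ((2*d)*s) * Real.exp (-ν*s) = Real.exp ((2*d - ν)*s) := by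
        rw [← Real.exp_add]
        congr 1
        ring
      have e2 : Real.exp ((2*d)*s) * Real.exp (-(2*d)*s) = 1 := by
        rw [← Real.exp_add, show (2*d)*s + -(2*d)*s = 0 by ring, Real.exp_zero]
      calc Real.exp ((2*d)*s) * (A' * Real.exp (-ν*s) + B * Real.exp (-(2*d)*s))
          = A' * (Real.exp ((2*d)*s) * Real.exp (-ν*s))
            + B * (Real.exp ((2*d)*s) * Real.exp (-(2*d)*s)) := by ring
        _ = A' * Real.exp ((2*d - ν)*s) + B := by rw [e1, e2, mul_one]
    have hfin : Real.exp ((2*d) * s) * YI s < εf := by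
      have h2 : Real.exp ((2*d) * s) * YI s ≤ Real.exp ((2*d) * s) * v s :=
        mul_le_mul_of_nonneg_left hYle (Real.exp_nonneg _)
      rw [hcalc] at h2
      have hB4 : B = εf/4 := hBdef
      linarith
    rw [Real.dist_eq, sub_zero, abs_of_nonneg (mul_nonneg (Real.exp_nonneg _) (hYnn s))]
    exact hfin
  -- final massage
  have key2 : Tendsto (fun s => Real.sqrt (Real.exp ((2*d) * s) * YI s)) atTop (nhds 0) := by
    simpa using key.sqrt
  refine key2.congr fun s => ?_
  rw [Real.sqrt_mul (Real.exp_nonneg _), show (2*d) * s = d*s + d*s by ring, Real.exp_add,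
    Real.sqrt_mul_self (Real.exp_nonneg _)]
end
end

section
/- Let g : ℝ → ℝ be smooth and 2π-periodic, let k be a negative integer, and suppose there exist σ > 0 and a nonempty open interval I ⊂ (2πk, 0) such that g(ϑ) ≥ σ for all ϑ ∈ I. Then there exists a smooth function ϑ : ℝ → ℝ such that ϑ(0) = 0, ϑ(1) = 2πk, the derivative ϑ′ is 1-periodic, and ϑ′(t) − g(ϑ(t)) < 0 for all t ∈ ℝ. -/
set_option maxHeartbeats 1000000


open Filter Set

noncomputable section

private lemma cos_le_cos_aux {c θ : ℝ} (hc0 : 0 ≤ c) (h1 : c ≤ θ)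
    (h2 : θ ≤ 2 * Real.pi - c) : Real.cos θ ≤ Real.cos c := by
  rcases le_or_gt θ Real.pi with hθ | hθ
  · exact Real.cos_le_cos_of_nonneg_of_le_pi hc0 hθ h1
  · rw [← Real.cos_two_pi_sub θ]
    exact Real.cos_le_cos_of_nonneg_of_le_pi hc0 (by linarith) (by linarith)

private lemma periodic_lowerBound {g : ℝ → ℝ} (hg : Continuous g)
    (hper : Function.Periodic g (2 * Real.pi)) : ∃ m, ∀ x, m ≤ g x := by
  have h2π : (0:ℝ) < 2 * Real.pi := by positivity
  obtain ⟨x₀, -, hx₀⟩ := (isCompact_Icc (a := (0:ℝ)) (b := 2 * Real.pi)).exists_isMinOn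
    (nonempty_Icc.2 h2π.le) hg.continuousOn
  refine ⟨g x₀, fun x => ?_⟩
  set n : ℤ := ⌊x / (2 * Real.pi)⌋ with hn
  have hf1 : (n:ℝ) * (2 * Real.pi) ≤ x := by
    have := Int.floor_le (x / (2 * Real.pi))
    rwa [le_div_iff₀ h2π] at this
  have hf2 : x < ((n:ℝ) + 1) * (2 * Real.pi) := by
    have := Int.lt_floor_add_one (x / (2 * Real.pi))
    rw [div_lt_iff₀ h2π] at this
    exact_mod_cast this
  have hmem : x - (n:ℝ) * (2 * Real.pi) ∈ Icc (0:ℝ) (2 * Real.pi) :=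
    ⟨by linarith, by nlinarith⟩
  have h := isMinOn_iff.mp hx₀ _ hmem
  rwa [hper.sub_int_mul_eq n] at h

/-- construction of the angle function in Case 2, `k < 0`: given a
smooth `2π`-periodic `g` bounded below by `σ > 0` on some nonempty open subinterval of
`(2πk, 0)`, there is a smooth angle function `ϑ` with `ϑ(0) = 0`, `ϑ(1) = 2πk`,
`1`-periodic derivative, and `ϑ' − g∘ϑ < 0` everywhere. -/
theorem stmt12 (g : ℝ → ℝ) (hg : ContDiff ℝ (⊤ : ℕ∞) g)
    (hper : Function.Periodic g (2 * Real.pi))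
    (k : ℤ) (hk : k < 0) (σ : ℝ) (hσ : 0 < σ) (a b : ℝ)
    (ha : 2 * Real.pi * (k : ℝ) < a) (hab : a < b) (hb : b < 0)
    (hgI : ∀ x ∈ Ioo a b, σ ≤ g x) :
    ∃ ϑ : ℝ → ℝ, ContDiff ℝ (⊤ : ℕ∞) ϑ ∧ ϑ 0 = 0 ∧ ϑ 1 = 2 * Real.pi * (k : ℝ) ∧
      Function.Periodic (deriv ϑ) 1 ∧ ∀ t : ℝ, deriv ϑ t - g (ϑ t) < 0 := by
  have hπ : (0:ℝ) < Real.pi := Real.pi_pos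
  obtain ⟨m0, hm0⟩ := periodic_lowerBound hg.continuous hper
  set K : ℝ := 2 * Real.pi * (k : ℝ) with hKdef
  clear_value K
  have hK0 : K < 0 := by
    rw [hKdef]
    exact mul_neg_of_pos_of_neg (by positivity) (by exact_mod_cast hk)
  set M : ℝ := min m0 K - 1 with hMdef
  clear_value M
  have hMK : M < K := by
    have := min_le_right m0 K; simp only [hMdef]; linarith
  have hM0 : M < 0 := hMK.trans hK0
  have hMg : ∀ x, M < g x := fun x => by
    have h1 := min_le_left m0 K
    have := hm0 x
    simp only [hMdef]; linarith
  set T : ℝ := K / M with hTdef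
  clear_value T
  have hT0 : 0 < T := by rw [hTdef]; exact div_pos_of_neg_of_neg hK0 hM0
  have hMT : M * T = K := by
    rw [hTdef, mul_comm, div_mul_cancel₀ _ hM0.ne]
  have hT1 : T < 1 := by
    by_contra hT1
    push_neg at hT1
    have : M * T ≤ M * 1 := mul_le_mul_of_nonpos_left hT1 hM0.le
    rw [mul_one, hMT] at this
    exact absurd this (not_le.2 hMK)
  set A : ℝ := b / M with hAdef
  clear_value A
  set B : ℝ := a / M with hBdef
  clear_value B
  have hA0 : 0 < A := by rw [hAdef]; exact div_pos_of_neg_of_neg hb hM0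
  have hAB : A < B := by
    have h := div_pos_of_neg_of_neg (show a - b < 0 by linarith) hM0
    rw [sub_div] at h; simp only [hAdef, hBdef]; linarith
  have hBT : B < T := by
    have h := div_pos_of_neg_of_neg (show K - a < 0 by linarith) hM0
    rw [sub_div] at h; simp only [hBdef, hTdef]; linarith
  have hMA : M * A = b := by rw [hAdef, mul_comm, div_mul_cancel₀ _ hM0.ne]
  have hMB : M * B = a := by rw [hBdef, mul_comm, div_mul_cancel₀ _ hM0.ne]
  set D : ℝ := B - A with hDdef
  clear_value D
  have hD0 : 0 < D := by simp only [hDdef]; linarith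
  set p : ℝ := A + D / 8 with hpdef
  clear_value p
  set q : ℝ := B + (1 - T) - D / 8 with hqdef
  clear_value q
  have hp0 : 0 < p := by simp only [hpdef]; linarith
  have hq1 : q < 1 := by simp only [hqdef]; linarith
  set L : ℝ := q - p with hLdef
  clear_value L
  have hLD : L = (3/4) * D + (1 - T) := by simp only [hLdef, hqdef, hpdef, hDdef]; ring
  have hL0 : 0 < L := by rw [hLD]; linarith
  have hL1 : L < 1 := by simp only [hLdef]; linarith
  have hLD4 : 0 < L - D / 4 := by rw [hLD]; linarith
  have hpq : p < q := by simp only [hLdef] at hL0; linarith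
  set t₀ : ℝ := (p + q) / 2 with ht₀def
  clear_value t₀
  set c₁ : ℝ := Real.cos (Real.pi * L) with hc₁def
  clear_value c₁
  set c₂ : ℝ := Real.cos (Real.pi * (L - D / 4)) with hc₂def
  clear_value c₂
  have hc12 : c₁ < c₂ := by
    rw [hc₁def, hc₂def]
    exact Real.cos_lt_cos_of_nonneg_of_le_pi (mul_nonneg hπ.le hLD4.le)
      (mul_le_of_le_one_right hπ.le hL1.le)
      (mul_lt_mul_of_pos_left (by linarith) hπ)
  set ψ : ℝ → ℝ := fun s =>
    Real.smoothTransition ((Real.cos (2 * Real.pi * (s - t₀)) - c₁) / (c₂ - c₁)) with hψdef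
  clear_value ψ
  have hψsmooth : ContDiff ℝ (⊤ : ℕ∞) ψ := by
    rw [hψdef]

    exact Real.smoothTransition.contDiff.comp
      (((Real.contDiff_cos.comp
        (contDiff_const.mul (contDiff_id.sub contDiff_const))).sub contDiff_const).div_const _)
  have hψcont : Continuous ψ := hψsmooth.continuous
  have hψper : Function.Periodic ψ 1 := by
    intro x
    simp only [hψdef]
    rw [show 2 * Real.pi * (x + 1 - t₀) = 2 * Real.pi * (x - t₀) + 2 * Real.pi by ring,
      Real.cos_add_two_pi]
  have hψ0 : ∀ s, 0 ≤ ψ s := fun s => by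
    simp only [hψdef]; exact Real.smoothTransition.nonneg _
  have hψ1 : ∀ s, ψ s ≤ 1 := fun s => by
    simp only [hψdef]; exact Real.smoothTransition.le_one _
  -- vanishing outside (p, q) within [0, 1]
  have hsupp : ∀ s, 0 ≤ s → s ≤ 1 → (s ≤ p ∨ q ≤ s) → ψ s = 0 := by
    intro s hs0 hs1 hcase
    simp only [hψdef]
    apply Real.smoothTransition.zero_of_nonpos
    apply div_nonpos_of_nonpos_of_nonneg _ (by linarith)
    have hu : Real.cos (2 * Real.pi * (s - t₀)) ≤ c₁ := by
      rw [hc₁def]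
      have hπL : 0 ≤ Real.pi * L := by positivity
      rcases hcase with hcase | hcase
      · rw [show 2 * Real.pi * (s - t₀) = -(2 * Real.pi * (t₀ - s)) by ring, Real.cos_neg]
        have h1 : L / 2 ≤ t₀ - s := by simp only [ht₀def, hLdef]; linarith
        have h2 : t₀ - s ≤ 1 - L / 2 := by simp only [ht₀def, hLdef]; linarith
        have e1 := mul_le_mul_of_nonneg_left h1 (by positivity : (0:ℝ) ≤ 2 * Real.pi)
        have e2 := mul_le_mul_of_nonneg_left h2 (by positivity : (0:ℝ) ≤ 2 * Real.pi)
        exact cos_le_cos_aux hπL (by linarith) (by linarith)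
      · have h1 : L / 2 ≤ s - t₀ := by simp only [ht₀def, hLdef]; linarith
        have h2 : s - t₀ ≤ 1 - L / 2 := by simp only [ht₀def, hLdef]; linarith
        have e1 := mul_le_mul_of_nonneg_left h1 (by positivity : (0:ℝ) ≤ 2 * Real.pi)
        have e2 := mul_le_mul_of_nonneg_left h2 (by positivity : (0:ℝ) ≤ 2 * Real.pi)
        exact cos_le_cos_aux hπL (by linarith) (by linarith)
    linarith
  -- plateau
  have hplateau : ∀ s, p + D / 8 ≤ s → s ≤ q - D / 8 → ψ s = 1 := by
    intro s h1 h2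
    simp only [hψdef]
    apply Real.smoothTransition.one_of_one_le
    rw [le_div_iff₀ (by linarith : (0:ℝ) < c₂ - c₁), one_mul]
    have habs : |s - t₀| ≤ (L - D / 4) / 2 :=
      abs_le.2 ⟨by simp only [ht₀def, hLdef]; linarith, by simp only [ht₀def, hLdef]; linarith⟩
    have habs2 : |2 * Real.pi * (s - t₀)| ≤ Real.pi * (L - D / 4) := by
      rw [abs_mul, abs_of_pos (by positivity : (0:ℝ) < 2 * Real.pi)]
      have e1 := mul_le_mul_of_nonneg_left habs (by positivity : (0:ℝ) ≤ 2 * Real.pi)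
      linarith
    have hcc : c₂ ≤ Real.cos (2 * Real.pi * (s - t₀)) := by
      rw [← Real.cos_abs (2 * Real.pi * (s - t₀)), hc₂def]
      exact Real.cos_le_cos_of_nonneg_of_le_pi (abs_nonneg _)
        (mul_le_of_le_one_right hπ.le (by linarith)) habs2
    linarith
  -- integrals
  have hint : ∀ u v : ℝ, IntervalIntegrable ψ MeasureTheory.volume u v :=
    fun u v => hψcont.intervalIntegrable u v
  set H : ℝ → ℝ := fun t => ∫ x in (0:ℝ)..t, ψ x with hHdef
  clear_value H
  have hHp0 : (∫ x in (0:ℝ)..p, ψ x) = 0 := by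
    have h0 : EqOn ψ (fun _ => (0:ℝ)) (uIcc 0 p) := by
      intro x hx
      rw [uIcc_of_le hp0.le] at hx
      exact hsupp x hx.1 (by linarith [hx.2, hpq, hq1]) (Or.inl hx.2)
    rw [intervalIntegral.integral_congr h0]
    simp
  have hq10 : (∫ x in q..(1:ℝ), ψ x) = 0 := by
    have h0 : EqOn ψ (fun _ => (0:ℝ)) (uIcc q 1) := by
      intro x hx
      rw [uIcc_of_le hq1.le] at hx
      exact hsupp x (by linarith [hx.1, hp0, hpq]) hx.2 (Or.inr hx.1)
    rw [intervalIntegral.integral_congr h0]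
    simp
  set J : ℝ := H 1 with hJdef
  clear_value J
  have hJlow : 1 - T ≤ J := by
    have e1 := intervalIntegral.integral_add_adjacent_intervals
      (hint 0 (p + D/8)) (hint (p + D/8) (q - D/8))
    have e2 := intervalIntegral.integral_add_adjacent_intervals
      (hint 0 (q - D/8)) (hint (q - D/8) 1)
    have h1 : 0 ≤ ∫ x in (0:ℝ)..(p + D/8), ψ x :=
      intervalIntegral.integral_nonneg (by linarith) (fun u _ => hψ0 u)
    have h2 : 0 ≤ ∫ x in (q - D/8)..(1:ℝ), ψ x :=
      intervalIntegral.integral_nonneg (by linarith) (fun u _ => hψ0 u)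
    have h3 : (∫ x in (p + D/8)..(q - D/8), ψ x) = (q - D/8) - (p + D/8) := by
      have h0 : EqOn ψ (fun _ => (1:ℝ)) (uIcc (p + D/8) (q - D/8)) := by
        intro x hx
        rw [uIcc_of_le (by simp only [hLdef] at hLD4; linarith)] at hx
        exact hplateau x hx.1 hx.2
      rw [intervalIntegral.integral_congr h0]
      simp
    have hLeq : (q - D/8) - (p + D/8) = L - D/4 := by simp only [hLdef]; ring
    have : (1:ℝ) - T ≤ L - D/4 := by rw [hLD]; linarith
    simp only [hJdef, hHdef]
    rw [← e2, ← e1]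
    linarith
  have hJpos : 0 < J := lt_of_lt_of_le (by linarith) hJlow
  set l : ℝ := (1 - T) / J with hldef
  clear_value l
  have hl0 : 0 ≤ l := by rw [hldef]; exact div_nonneg (by linarith) hJpos.le
  have hl1 : l ≤ 1 := by rw [hldef]; exact (div_le_one hJpos).2 hJlow
  have hlJ : l * J = 1 - T := by rw [hldef, div_mul_cancel₀ _ hJpos.ne']
  -- the angle function
  set ϑ : ℝ → ℝ := fun t => M * (t - l * H t) with hϑdef
  clear_value ϑ
  have hHd : ∀ t, HasDerivAt H (ψ t) t := by
    intro t
    rw [hHdef]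
    exact (hψcont.integral_hasStrictDerivAt 0 t).hasDerivAt
  have hϑd : ∀ t, HasDerivAt ϑ (M * (1 - l * ψ t)) t := by
    intro t
    rw [hϑdef]
    exact ((hasDerivAt_id t).sub ((hHd t).const_mul l)).const_mul M
  have hderiv_eq : deriv ϑ = fun t => M * (1 - l * ψ t) := funext fun t => (hϑd t).deriv
  have hϑsmooth : ContDiff ℝ (⊤ : ℕ∞) ϑ := by
    rw [contDiff_infty_iff_deriv]
    refine ⟨fun t => (hϑd t).differentiableAt, ?_⟩
    rw [hderiv_eq]
    exact contDiff_const.mul (contDiff_const.sub (contDiff_const.mul hψsmooth))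
  have hϑ0 : ϑ 0 = 0 := by
    simp [hϑdef, hHdef]
  have hϑ1 : ϑ 1 = K := by
    have h2 : (1:ℝ) - l * J = T := by linarith
    simp only [hϑdef]
    rw [← hJdef, h2, hMT]
  have hdper : Function.Periodic (deriv ϑ) 1 := by
    rw [hderiv_eq]
    intro x
    simp only [hψper x]
  -- periodicity of increments
  have hHadd : ∀ t : ℝ, H (t + 1) = H t + J := by
    intro t
    have e1 := intervalIntegral.integral_add_adjacent_intervals (hint 0 t) (hint t (t + 1))
    have e2 := hψper.intervalIntegral_add_eq t 0
    simp only [zero_add] at e2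
    simp only [hJdef, hHdef]
    rw [← e1, e2]
  have hϑadd : ∀ t : ℝ, ϑ (t + 1) = ϑ t + K := by
    intro t
    have h1 : ϑ (t + 1) = M * (t + 1 - l * (H t + J)) := by
      simp only [hϑdef]; rw [hHadd t]
    have h2 : (1:ℝ) - l * J = T := by linarith
    rw [h1, show M * (t + 1 - l * (H t + J)) = M * (t - l * H t) + M * (1 - l * J) by ring,
      h2, hMT]
    simp only [hϑdef]
  have key : ∀ n : ℤ, ∀ t : ℝ, ϑ (t + n) = ϑ t + n * K := by
    intro n
    induction n using Int.induction_on with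
    | zero => simp
    | succ m ih =>
      intro t
      have ih' := ih t
      push_cast at ih' ⊢
      rw [show t + ((m:ℝ) + 1) = (t + m) + 1 by ring, hϑadd, ih']
      ring
    | pred m ih =>
      intro t
      have ih' := ih t
      push_cast at ih' ⊢
      have h2 := hϑadd (t + (-(m:ℝ) - 1))
      rw [show t + (-(m:ℝ) - 1) + 1 = t + -(m:ℝ) by ring] at h2
      have h4 : ϑ (t + (-(m:ℝ) - 1)) = ϑ t + -(m:ℝ) * K - K := by
        rw [← ih']; linarith
      rw [h4]
      ring
  -- main inequality on [0, 1)
  have main : ∀ s : ℝ, 0 ≤ s → s < 1 → deriv ϑ s - g (ϑ s) < 0 := by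
    intro s hs0 hs1
    rw [hderiv_eq]
    simp only
    by_cases hzero : ψ s = 0
    · rw [hzero]
      simp only [mul_zero, sub_zero, mul_one]
      have := hMg (ϑ s)
      linarith
    · -- ψ s > 0, hence p < s < q
      have hψpos : 0 < ψ s := lt_of_le_of_ne (hψ0 s) (Ne.symm hzero)
      have hrange : p < s ∧ s < q := by
        by_contra hcon
        push_neg at hcon
        rcases le_or_gt s p with hsp | hsp
        · exact hzero (hsupp s hs0 hs1.le (Or.inl hsp))
        · exact hzero (hsupp s hs0 hs1.le (Or.inr (hcon hsp)))
      obtain ⟨hps, hsq⟩ := hrange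
      -- bounds on H s
      have hHs_eq : H s = ∫ x in p..s, ψ x := by
        have e1 := intervalIntegral.integral_add_adjacent_intervals (hint 0 p) (hint p s)
        simp only [hHdef]
        rw [← e1, hHp0, zero_add]
      have hHs_nonneg : 0 ≤ H s := by
        rw [hHs_eq]
        exact intervalIntegral.integral_nonneg hps.le (fun u _ => hψ0 u)
      have hHs_le : H s ≤ s - p := by
        rw [hHs_eq]
        have := intervalIntegral.integral_mono_on hps.le (hint p s)
          (intervalIntegrable_const (c := (1:ℝ))) (fun u _ => hψ1 u)
        simpa using this
      have hHs_low : J - (q - s) ≤ H s := by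
        have e1 := intervalIntegral.integral_add_adjacent_intervals (hint 0 s) (hint s 1)
        have e2 := intervalIntegral.integral_add_adjacent_intervals (hint s q) (hint q 1)
        have h4 : (∫ x in s..(1:ℝ), ψ x) = ∫ x in s..q, ψ x := by
          rw [← e2, hq10, add_zero]
        have h5 : (∫ x in s..q, ψ x) ≤ q - s := by
          have := intervalIntegral.integral_mono_on hsq.le (hint s q)
            (intervalIntegrable_const (c := (1:ℝ))) (fun u _ => hψ1 u)
          simpa using this
        have h6 : H s + ∫ x in s..(1:ℝ), ψ x = J := by
          simp only [hHdef, hJdef]; exact e1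
        linarith
      -- position of ϑ s
      set τ : ℝ := s - l * H s with hτdef
      have hϑs : ϑ s = M * τ := by simp only [hϑdef, hτdef]
      have hτlow : p ≤ τ := by
        have h7 : l * H s ≤ H s := mul_le_of_le_one_left hHs_nonneg hl1
        simp only [hτdef]; linarith
      have hτhigh : τ ≤ q - (1 - T) := by
        have h8 : l * (J - (q - s)) ≤ l * H s := mul_le_mul_of_nonneg_left hHs_low hl0
        have h9 : l * (q - s) ≤ q - s := mul_le_of_le_one_left (by linarith) hl1
        have h10 : l * (J - (q - s)) = (1 - T) - l * (q - s) := by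
          rw [mul_sub, hlJ]
        simp only [hτdef]
        linarith
      have hτA : A < τ := by simp only [hpdef] at hτlow; linarith
      have hτB : τ < B := by simp only [hqdef] at hτhigh; linarith
      have hϑa : a < ϑ s := by
        rw [hϑs, ← hMB]
        exact mul_lt_mul_of_neg_left hτB hM0
      have hϑb : ϑ s < b := by
        rw [hϑs, ← hMA]
        exact mul_lt_mul_of_neg_left hτA hM0
      have hgσ : σ ≤ g (ϑ s) := hgI _ ⟨hϑa, hϑb⟩
      have hfac : 0 ≤ 1 - l * ψ s := by
        have h11 : l * ψ s ≤ ψ s := mul_le_of_le_one_left (hψ0 s) hl1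
        have h12 := hψ1 s
        linarith
      have : M * (1 - l * ψ s) ≤ 0 := mul_nonpos_of_nonpos_of_nonneg hM0.le hfac
      linarith
  refine ⟨ϑ, hϑsmooth, hϑ0, hϑ1, hdper, ?_⟩
  intro t
  set n : ℤ := ⌊t⌋ with hn
  set s : ℝ := t - n with hs
  have hs0 : 0 ≤ s := by rw [hs]; linarith [Int.floor_le t]
  have hs1 : s < 1 := by rw [hs]; linarith [Int.lt_floor_add_one t]
  have hts : t = s + n := by rw [hs]; ring
  have hd : deriv ϑ t = deriv ϑ s := by
    rw [hts]
    have := (hdper.int_mul n) s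
    simpa using this
  have hϑeq : ϑ t = ϑ s + n * K := by rw [hts]; exact key n s
  have hgeq : g (ϑ t) = g (ϑ s) := by
    rw [hϑeq]
    have h2 := (hper.int_mul (n * k)) (ϑ s)
    rw [show (n:ℝ) * K = (↑(n * k):ℝ) * (2 * Real.pi) by rw [hKdef]; push_cast; ring]
    exact h2
  rw [hd, hgeq]
  exact main s hs0 hs1
end
end

section
/- Let B ⊂ ℝ² be an open ball centered at the origin and let J : ℝ/ℤ×B → ℝ^{2×2} be smooth, with J(p)² = −I and det[v | J(p)v] > 0 for every point p and every nonzero v ∈ ℝ². Then there exists a smooth map L : ℝ/ℤ×B → ℝ^{2×2} with det L(p) = 1 and L(p)J(p) = J₀L(p) for every p, where J₀ = [[0,−1],[1,0]]. -/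
open Filter Set

noncomputable section

/-- `J₀ = [[0,-1],[1,0]]`. -/
def J02 : Matrix (Fin 2) (Fin 2) ℝ := !![0, -1; 1, 0]

/-- The `2 × 2` matrix with columns `a` and `b`. -/
def col2 (a b : Fin 2 → ℝ) : Matrix (Fin 2) (Fin 2) ℝ := !![a 0, b 0; a 1, b 1]

/-- smooth `Sp(1)`-valued conjugation to the standard complex
structure: a smooth family `J` of complex structures on `ℝ²` compatible with the
standard area form, parametrized by `ℝ/ℤ × B`, admits a smooth family `L` of matrices of
determinant `1` with `L J = J₀ L`. -/
theorem stmt15 (rB : ℝ) (hrB : 0 < rB)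
    (J : ℝ → EuclideanSpace ℝ (Fin 2) → Matrix (Fin 2) (Fin 2) ℝ)
    (hsmooth : ∀ i j, ContDiffOn ℝ (⊤ : ℕ∞)
      (fun p : ℝ × EuclideanSpace ℝ (Fin 2) => J p.1 p.2 i j)
      (univ ×ˢ Metric.ball (0 : EuclideanSpace ℝ (Fin 2)) rB))
    (hper : ∀ θ x, J (θ + 1) x = J θ x)
    (hsq : ∀ θ : ℝ, ∀ x ∈ Metric.ball (0 : EuclideanSpace ℝ (Fin 2)) rB,
      J θ x * J θ x = -1)
    (hcomp : ∀ θ : ℝ, ∀ x ∈ Metric.ball (0 : EuclideanSpace ℝ (Fin 2)) rB,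
      ∀ v : Fin 2 → ℝ, v ≠ 0 → 0 < (col2 v ((J θ x).mulVec v)).det) :
    ∃ L : ℝ → EuclideanSpace ℝ (Fin 2) → Matrix (Fin 2) (Fin 2) ℝ,
      (∀ i j, ContDiffOn ℝ (⊤ : ℕ∞)
        (fun p : ℝ × EuclideanSpace ℝ (Fin 2) => L p.1 p.2 i j)
        (univ ×ˢ Metric.ball (0 : EuclideanSpace ℝ (Fin 2)) rB)) ∧
      (∀ θ x, L (θ + 1) x = L θ x) ∧
      (∀ θ : ℝ, ∀ x ∈ Metric.ball (0 : EuclideanSpace ℝ (Fin 2)) rB,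
        (L θ x).det = 1 ∧ L θ x * J θ x = J02 * L θ x) := by
  -- Positivity of the lower-left entry `c = J θ x 1 0`.
  have hc : ∀ θ : ℝ, ∀ x ∈ Metric.ball (0 : EuclideanSpace ℝ (Fin 2)) rB,
      0 < J θ x 1 0 := by
    intro θ x hx
    have h := hcomp θ x hx ![1, 0] (by
      intro h
      have := congrFun h 0
      simp at this)
    simpa [col2, Matrix.det_fin_two_of, Matrix.mulVec, dotProduct,
      Fin.sum_univ_two] using h
  refine ⟨fun θ x => !![Real.sqrt (J θ x 1 0), -(J θ x 0 0) / Real.sqrt (J θ x 1 0);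
      0, 1 / Real.sqrt (J θ x 1 0)], ?_, ?_, ?_⟩
  · -- smoothness
    intro i j
    have hopen : IsOpen ((univ : Set ℝ) ×ˢ Metric.ball (0 : EuclideanSpace ℝ (Fin 2)) rB) :=
      isOpen_univ.prod Metric.isOpen_ball
    intro p hp
    have hcd : ∀ i' j', ContDiffAt ℝ (⊤ : ℕ∞)
        (fun q : ℝ × EuclideanSpace ℝ (Fin 2) => J q.1 q.2 i' j') p :=
      fun i' j' => (hsmooth i' j').contDiffAt (hopen.mem_nhds hp)
    have hcpos : 0 < J p.1 p.2 1 0 := hc p.1 p.2 hp.2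
    have hsqrt : ContDiffAt ℝ (⊤ : ℕ∞)
        (fun q : ℝ × EuclideanSpace ℝ (Fin 2) => Real.sqrt (J q.1 q.2 1 0)) p :=
      (hcd 1 0).sqrt (ne_of_gt hcpos)
    have hsne : Real.sqrt (J p.1 p.2 1 0) ≠ 0 := by positivity
    fin_cases i <;> fin_cases j <;>
      simp only [Matrix.cons_val', Matrix.cons_val_zero, Matrix.cons_val_one,
        Matrix.head_cons, Matrix.head_fin_const, Matrix.empty_val',
        Matrix.cons_val_fin_one, Fin.isValue] <;>
      first
      | exact hsqrt.contDiffWithinAt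
      | exact (((hcd 0 0).neg).div hsqrt hsne).contDiffWithinAt
      | exact contDiffWithinAt_const
      | exact (contDiffAt_const.div hsqrt hsne).contDiffWithinAt
  · intro θ x; simp [hper]
  · intro θ x hx
    have hcpos := hc θ x hx
    have hsne : Real.sqrt (J θ x 1 0) ≠ 0 := by positivity
    have hsq' := hsq θ x hx
    -- entry relations from J² = -1
    have e00 : J θ x 0 0 * J θ x 0 0 + J θ x 0 1 * J θ x 1 0 = -1 := by
      have := congrFun (congrFun hsq' 0) 0
      simpa [Matrix.mul_apply, Fin.sum_univ_two] using this
    have e10 : J θ x 1 0 * J θ x 0 0 + J θ x 1 1 * J θ x 1 0 = 0 := by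
      have := congrFun (congrFun hsq' 1) 0
      simpa [Matrix.mul_apply, Fin.sum_univ_two] using this
    have hd : J θ x 1 1 = -(J θ x 0 0) := by
      have hc0 : J θ x 1 0 ≠ 0 := ne_of_gt hcpos
      field_simp at e10
      nlinarith [e10]
    have hsqc : Real.sqrt (J θ x 1 0) * Real.sqrt (J θ x 1 0) = J θ x 1 0 :=
      Real.mul_self_sqrt hcpos.le
    constructor
    · simp [Matrix.det_fin_two_of]
      field_simp
    · ext i j
      fin_cases i <;> fin_cases j <;>
        simp [Matrix.mul_apply, Fin.sum_univ_two, J02, hd]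
      · field_simp
        linear_combination (J θ x 0 0) * hsqc
      · field_simp
        linear_combination (J θ x 0 1) * hsqc + e00
      · field_simp
        rw [sq, hsqc]
      · ring
end
end

section
/- Let ε₂ ∈ (0,1), let A = (1−ε₂,1)×ℝ/ℤ, and let ρ₀, ρ₁ : A → (0,∞) be smooth functions with ∂_rρ₀ < 0 and ∂_rρ₁ < 0 everywhere. Let 0 < s₁ < s₀ and let r₀, r₁ : ℝ/ℤ → (1−ε₂,1) be smooth with r₀(ϑ) < r₁(ϑ) for all ϑ, such that ρ₁(r₁(ϑ),ϑ) = s₁ and ρ₁(r,ϑ) < s₁ whenever r > r₁(ϑ), while ρ₀(r₀(ϑ),ϑ) = s₀ and ρ₀(r,ϑ) > s₀ whenever r < r₀(ϑ). Then there exists a smooth function ρ₂ : A → (0,∞) with ∂_rρ₂ < 0 everywhere, ρ₂(r,ϑ) = ρ₁(r,ϑ) whenever r ≥ r₁(ϑ), and ρ₂(r,ϑ) = ρ₀(r,ϑ) whenever r ≤ r₀(ϑ). -/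
open Filter Set Topology

noncomputable section

namespace Stmt16Aux

lemma expNegInvGlue_monotone : Monotone expNegInvGlue := by
  intro x y hxy
  rcases le_or_gt x 0 with hx | hx
  · rw [expNegInvGlue.zero_of_nonpos hx]; exact expNegInvGlue.nonneg y
  · have hy : 0 < y := hx.trans_le hxy
    simp only [expNegInvGlue, if_neg (not_le.2 hx), if_neg (not_le.2 hy)]
    exact Real.exp_le_exp.2 (neg_le_neg (inv_anti₀ hx hxy))

lemma st_monotone : Monotone Real.smoothTransition := by
  intro x y hxy
  have hfx : expNegInvGlue x ≤ expNegInvGlue y := expNegInvGlue_monotone hxy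
  have hgy : expNegInvGlue (1 - y) ≤ expNegInvGlue (1 - x) :=
    expNegInvGlue_monotone (by linarith)
  have hdx := Real.smoothTransition.pos_denom x
  have hdy := Real.smoothTransition.pos_denom y
  unfold Real.smoothTransition
  rw [div_le_div_iff₀ hdx hdy]
  nlinarith [expNegInvGlue.nonneg x, expNegInvGlue.nonneg (1 - y)]

lemma deriv_nonneg_of_monotone {f : ℝ → ℝ} (hm : Monotone f) (x : ℝ) : 0 ≤ deriv f x := by
  by_cases hd : DifferentiableAt ℝ f x
  · have h := hd.hasDerivAt
    rw [hasDerivAt_iff_tendsto_slope] at h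
    have h2 : Tendsto (slope f x) (𝓝[>] x) (𝓝 (deriv f x)) :=
      h.mono_left (nhdsWithin_mono x fun y hy => ne_of_gt hy)
    refine ge_of_tendsto h2 ?_
    filter_upwards [self_mem_nhdsWithin] with y hy
    rw [slope_def_field]
    exact div_nonneg (sub_nonneg.2 (hm hy.le)) (sub_nonneg.2 hy.le)
  · simp [deriv_zero_of_not_differentiableAt hd]

lemma st_deriv_nonneg (x : ℝ) : 0 ≤ deriv Real.smoothTransition x :=
  deriv_nonneg_of_monotone st_monotone x

lemma periodic_min {F : ℝ → ℝ} (hc : Continuous F) (hp : ∀ x, F (x + 1) = F x) :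
    ∃ ϑ₀ : ℝ, ∀ ϑ : ℝ, F ϑ₀ ≤ F ϑ := by
  obtain ⟨ϑ₀, -, hmin⟩ := (isCompact_Icc (a := (0:ℝ)) (b := 1)).exists_isMinOn
    ⟨0, by norm_num⟩ hc.continuousOn
  refine ⟨ϑ₀, fun ϑ => ?_⟩
  have hper : Function.Periodic F 1 := hp
  have h1 : F (Int.fract ϑ) = F ϑ := by
    have h := hper.sub_int_mul_eq (x := ϑ) ⌊ϑ⌋
    rw [mul_one] at h
    rw [Int.fract]
    exact h
  rw [← h1]
  exact hmin ⟨Int.fract_nonneg ϑ, (Int.fract_lt_one ϑ).le⟩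

lemma exists_A (b' s₀ : ℝ) (hb : 0 < b') (hbs : b' < s₀) :
    ∃ A : ℝ → ℝ, ContDiff ℝ (⊤ : ℕ∞) A ∧ (∀ x, s₀ ≤ x → A x = x) ∧
      (∀ x, 0 ≤ x → b' ≤ A x) ∧ (∀ x, 0 ≤ deriv A x) ∧ (∀ x, 0 < x → 0 < deriv A x) := by
  have hs₀ : 0 < s₀ := hb.trans hbs
  set δ : ℝ := (s₀ - b') / 2 with hδ
  set ε : ℝ := (s₀ - b') / (2 * (s₀ + 1)) with hε
  have hδpos : 0 < δ := by rw [hδ]; linarith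
  have hεpos : 0 < ε := by rw [hε]; exact div_pos (by linarith) (by linarith)
  have hεlt : ε < 1 := by
    rw [hε, div_lt_one (by linarith)]
    nlinarith
  set σ : ℝ → ℝ := fun t => Real.smoothTransition ((t - (s₀ - δ)) / δ) with hσ
  set a : ℝ → ℝ := fun t => σ t + (1 - σ t) * (ε * Real.smoothTransition t) with ha
  have hσ01 : ∀ t, 0 ≤ σ t ∧ σ t ≤ 1 := fun t =>
    ⟨Real.smoothTransition.nonneg _, Real.smoothTransition.le_one _⟩
  have hst01 : ∀ t : ℝ, 0 ≤ Real.smoothTransition t ∧ Real.smoothTransition t ≤ 1 := fun t =>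
    ⟨Real.smoothTransition.nonneg _, Real.smoothTransition.le_one _⟩
  have ha_smooth : ContDiff ℝ (⊤ : ℕ∞) a := by
    have h1 : ContDiff ℝ (⊤ : ℕ∞) σ :=
      Real.smoothTransition.contDiff.comp ((contDiff_id.sub contDiff_const).div_const δ)
    exact h1.add ((contDiff_const.sub h1).mul
      (contDiff_const.mul Real.smoothTransition.contDiff))
  have ha_cont : Continuous a := ha_smooth.continuous
  have ha_nonneg : ∀ t, 0 ≤ a t := by
    intro t
    obtain ⟨h1, h2⟩ := hσ01 t
    obtain ⟨h3, h4⟩ := hst01 t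
    have : 0 ≤ ε * Real.smoothTransition t := by positivity
    rw [ha]; dsimp only; nlinarith
  have ha_le_one : ∀ t, a t ≤ 1 := by
    intro t
    obtain ⟨h1, h2⟩ := hσ01 t
    obtain ⟨h3, h4⟩ := hst01 t
    have h5 : ε * Real.smoothTransition t ≤ 1 := by nlinarith
    rw [ha]; dsimp only
    nlinarith [mul_le_mul_of_nonneg_left h5 (by linarith : (0:ℝ) ≤ 1 - σ t)]
  have ha_one : ∀ t, s₀ ≤ t → a t = 1 := by
    intro t ht
    have hσ1 : σ t = 1 := by
      rw [hσ]; dsimp only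
      exact Real.smoothTransition.one_of_one_le (by rw [le_div_iff₀ hδpos]; linarith)
    rw [ha]; dsimp only; rw [hσ1]; ring
  have ha_small : ∀ t, t ≤ s₀ - δ → a t ≤ ε := by
    intro t ht
    have hσ0 : σ t = 0 := by
      rw [hσ]; dsimp only
      exact Real.smoothTransition.zero_of_nonpos
        (div_nonpos_iff.2 (Or.inr ⟨by linarith, hδpos.le⟩))
    obtain ⟨h3, h4⟩ := hst01 t
    rw [ha]; dsimp only; rw [hσ0]; nlinarith
  have ha_pos : ∀ t, 0 < t → 0 < a t := by
    intro t ht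
    obtain ⟨h1, h2⟩ := hσ01 t
    have h3 : 0 < Real.smoothTransition t := Real.smoothTransition.pos_of_pos ht
    have h4 : Real.smoothTransition t ≤ 1 := (hst01 t).2
    have h5 : ε * Real.smoothTransition t ≤ 1 := by nlinarith
    have h6 : 0 < ε * Real.smoothTransition t := by positivity
    rw [ha]; dsimp only
    nlinarith [mul_nonneg h1 (by linarith : (0:ℝ) ≤ 1 - ε * Real.smoothTransition t)]
  set A : ℝ → ℝ := fun x => s₀ + ∫ t in s₀..x, a t with hA
  have hder : ∀ x, HasDerivAt A (a x) x := fun x =>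
    (ha_cont.integral_hasStrictDerivAt s₀ x).hasDerivAt.const_add s₀
  have hderiv : ∀ x, deriv A x = a x := fun x => (hder x).deriv
  have hA_smooth : ContDiff ℝ (⊤ : ℕ∞) A := by
    rw [contDiff_infty_iff_deriv]
    refine ⟨fun x => (hder x).differentiableAt, ?_⟩
    have : deriv A = a := funext hderiv
    rw [this]; exact ha_smooth
  have hAid : ∀ x, s₀ ≤ x → A x = x := by
    intro x hx
    have h1 : ∫ t in s₀..x, a t = ∫ t in s₀..x, (1:ℝ) := by
      refine intervalIntegral.integral_congr fun t ht => ?_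
      rw [uIcc_of_le hx] at ht
      exact ha_one t ht.1
    rw [hA]; dsimp only; rw [h1]; simp
  refine ⟨A, hA_smooth, hAid, ?_, fun x => (hderiv x) ▸ ha_nonneg x,
    fun x hx => (hderiv x) ▸ ha_pos x hx⟩
  intro x hx0
  rcases le_or_gt s₀ x with h | h
  · rw [hAid x h]; linarith
  · have hint : ∀ u v : ℝ, IntervalIntegrable a MeasureTheory.volume u v :=
      fun u v => ha_cont.intervalIntegrable u v
    have hsym : ∫ t in s₀..x, a t = - ∫ t in x..s₀, a t :=
      intervalIntegral.integral_symm x s₀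
    suffices h2 : (∫ t in x..s₀, a t) ≤ s₀ - b' by
      rw [hA]; dsimp only; rw [hsym]; linarith
    rcases le_or_gt x (s₀ - δ) with hx | hx
    · have hsplit : (∫ t in x..(s₀ - δ), a t) + ∫ t in (s₀-δ)..s₀, a t = ∫ t in x..s₀, a t :=
        intervalIntegral.integral_add_adjacent_intervals (hint _ _) (hint _ _)
      have h1 : (∫ t in x..(s₀ - δ), a t) ≤ ∫ t in x..(s₀ - δ), ε :=
        intervalIntegral.integral_mono_on hx (hint _ _)
          intervalIntegrable_const fun t ht => ha_small t ht.2
      have h1' : (∫ t in x..(s₀ - δ), (ε:ℝ)) = (s₀ - δ - x) * ε := by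
        rw [intervalIntegral.integral_const]; simp [smul_eq_mul]
      have h2 : (∫ t in (s₀-δ)..s₀, a t) ≤ ∫ t in (s₀-δ)..s₀, (1:ℝ) :=
        intervalIntegral.integral_mono_on (by linarith) (hint _ _)
          intervalIntegrable_const fun t ht => ha_le_one t
      have h2' : (∫ t in (s₀-δ)..s₀, (1:ℝ)) = δ := by
        rw [intervalIntegral.integral_const]; simp [smul_eq_mul]
      have hb1 : (s₀ - δ - x) * ε ≤ s₀ * ε := by
        have : s₀ - δ - x ≤ s₀ := by linarith
        nlinarith
      have hεs : s₀ * ε ≤ (s₀ - b') / 2 := by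
        rw [hε, mul_div_assoc', div_le_div_iff₀ (by linarith) (by norm_num)]
        nlinarith
      rw [← hsplit]
      have := h1.trans (le_of_eq h1')
      linarith [h2.trans (le_of_eq h2')]
    · have h1 : (∫ t in x..s₀, a t) ≤ ∫ t in x..s₀, (1:ℝ) :=
        intervalIntegral.integral_mono_on h.le (hint _ _) intervalIntegrable_const
          fun t ht => ha_le_one t
      have h1' : (∫ t in x..s₀, (1:ℝ)) = s₀ - x := by
        rw [intervalIntegral.integral_const]; simp [smul_eq_mul]
      have : s₀ - x < δ := by linarith
      rw [hδ] at this
      linarith [h1.trans (le_of_eq h1')]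

end Stmt16Aux

open Stmt16Aux

/-- interpolation of radially decreasing profiles on the annulus
`A = (1−ε₂,1) × ℝ/ℤ`. -/
theorem stmt16 (ε₂ : ℝ) (hε₂ : ε₂ ∈ Ioo (0:ℝ) 1)
    (ρ₀ ρ₁ : ℝ → ℝ → ℝ)
    (hsm₀ : ContDiffOn ℝ (⊤ : ℕ∞) (fun p : ℝ × ℝ => ρ₀ p.1 p.2) (Ioo (1 - ε₂) 1 ×ˢ univ))
    (hsm₁ : ContDiffOn ℝ (⊤ : ℕ∞) (fun p : ℝ × ℝ => ρ₁ p.1 p.2) (Ioo (1 - ε₂) 1 ×ˢ univ))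
    (hper₀ : ∀ r ϑ, ρ₀ r (ϑ + 1) = ρ₀ r ϑ)
    (hper₁ : ∀ r ϑ, ρ₁ r (ϑ + 1) = ρ₁ r ϑ)
    (hpos₀ : ∀ r ∈ Ioo (1 - ε₂) 1, ∀ ϑ : ℝ, 0 < ρ₀ r ϑ)
    (hpos₁ : ∀ r ∈ Ioo (1 - ε₂) 1, ∀ ϑ : ℝ, 0 < ρ₁ r ϑ)
    (hdec₀ : ∀ r ∈ Ioo (1 - ε₂) 1, ∀ ϑ : ℝ, deriv (fun r' => ρ₀ r' ϑ) r < 0)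
    (hdec₁ : ∀ r ∈ Ioo (1 - ε₂) 1, ∀ ϑ : ℝ, deriv (fun r' => ρ₁ r' ϑ) r < 0)
    (s₀ s₁ : ℝ) (hs₁ : 0 < s₁) (hs : s₁ < s₀)
    (r₀ r₁ : ℝ → ℝ)
    (hr₀sm : ContDiff ℝ (⊤ : ℕ∞) r₀) (hr₁sm : ContDiff ℝ (⊤ : ℕ∞) r₁)
    (hr₀per : ∀ ϑ, r₀ (ϑ + 1) = r₀ ϑ) (hr₁per : ∀ ϑ, r₁ (ϑ + 1) = r₁ ϑ)
    (hr₀mem : ∀ ϑ, r₀ ϑ ∈ Ioo (1 - ε₂) 1) (hr₁mem : ∀ ϑ, r₁ ϑ ∈ Ioo (1 - ε₂) 1)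
    (hrlt : ∀ ϑ, r₀ ϑ < r₁ ϑ)
    (hlev₁ : ∀ ϑ, ρ₁ (r₁ ϑ) ϑ = s₁)
    (habove₁ : ∀ ϑ : ℝ, ∀ r ∈ Ioo (1 - ε₂) 1, r₁ ϑ < r → ρ₁ r ϑ < s₁)
    (hlev₀ : ∀ ϑ, ρ₀ (r₀ ϑ) ϑ = s₀)
    (hbelow₀ : ∀ ϑ : ℝ, ∀ r ∈ Ioo (1 - ε₂) 1, r < r₀ ϑ → s₀ < ρ₀ r ϑ) :
    ∃ ρ₂ : ℝ → ℝ → ℝ,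
      ContDiffOn ℝ (⊤ : ℕ∞) (fun p : ℝ × ℝ => ρ₂ p.1 p.2) (Ioo (1 - ε₂) 1 ×ˢ univ) ∧
      (∀ r ϑ, ρ₂ r (ϑ + 1) = ρ₂ r ϑ) ∧
      (∀ r ∈ Ioo (1 - ε₂) 1, ∀ ϑ : ℝ, 0 < ρ₂ r ϑ) ∧
      (∀ r ∈ Ioo (1 - ε₂) 1, ∀ ϑ : ℝ, deriv (fun r' => ρ₂ r' ϑ) r < 0) ∧
      (∀ ϑ : ℝ, ∀ r ∈ Ioo (1 - ε₂) 1, r₁ ϑ ≤ r → ρ₂ r ϑ = ρ₁ r ϑ) ∧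
      (∀ ϑ : ℝ, ∀ r ∈ Ioo (1 - ε₂) 1, r ≤ r₀ ϑ → ρ₂ r ϑ = ρ₀ r ϑ) := by
  have hIoo : IsOpen (Ioo (1 - ε₂) 1 ×ˢ (univ : Set ℝ)) := isOpen_Ioo.prod isOpen_univ
  -- continuity of radial slices
  have hcont : ∀ (ρ : ℝ → ℝ → ℝ),
      ContDiffOn ℝ (⊤ : ℕ∞) (fun p : ℝ × ℝ => ρ p.1 p.2) (Ioo (1 - ε₂) 1 ×ˢ univ) →
      ∀ ϑ : ℝ, ContinuousOn (fun r => ρ r ϑ) (Ioo (1 - ε₂) 1) := by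
    intro ρ hsm ϑ
    have h := hsm.continuousOn.comp
      ((continuous_id.prodMk continuous_const).continuousOn :
        ContinuousOn (fun r : ℝ => (r, ϑ)) (Ioo (1 - ε₂) 1))
      (fun r hr => ⟨hr, mem_univ _⟩)
    exact h
  -- differentiability of radial slices
  have hdiff : ∀ (ρ : ℝ → ℝ → ℝ),
      ContDiffOn ℝ (⊤ : ℕ∞) (fun p : ℝ × ℝ => ρ p.1 p.2) (Ioo (1 - ε₂) 1 ×ˢ univ) →
      ∀ ϑ : ℝ, ∀ r ∈ Ioo (1 - ε₂) 1, DifferentiableAt ℝ (fun r' => ρ r' ϑ) r := by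
    intro ρ hsm ϑ r hr
    have h1 : DifferentiableAt ℝ (fun p : ℝ × ℝ => ρ p.1 p.2) (r, ϑ) :=
      (hsm.differentiableOn (by simp)).differentiableAt
        (hIoo.mem_nhds ⟨hr, mem_univ _⟩)
    have h2 : DifferentiableAt ℝ (fun r' : ℝ => (r', ϑ)) r :=
      differentiableAt_id.prodMk (differentiableAt_const ϑ)
    exact h1.comp r h2
  -- strict antitonicity of radial slices
  have hanti₁ : ∀ ϑ : ℝ, StrictAntiOn (fun r => ρ₁ r ϑ) (Ioo (1 - ε₂) 1) := by
    intro ϑ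
    refine strictAntiOn_of_deriv_neg (convex_Ioo _ _) (hcont ρ₁ hsm₁ ϑ) fun r hr => ?_
    rw [interior_Ioo] at hr
    exact hdec₁ r hr ϑ
  have hanti₀ : ∀ ϑ : ℝ, StrictAntiOn (fun r => ρ₀ r ϑ) (Ioo (1 - ε₂) 1) := by
    intro ϑ
    refine strictAntiOn_of_deriv_neg (convex_Ioo _ _) (hcont ρ₀ hsm₀ ϑ) fun r hr => ?_
    rw [interior_Ioo] at hr
    exact hdec₀ r hr ϑ
  -- the minimum m₁ of ϑ ↦ ρ₁ (r₀ ϑ) ϑ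
  set F : ℝ → ℝ := fun ϑ => ρ₁ (r₀ ϑ) ϑ with hF
  have hFc : Continuous F := by
    have h := hsm₁.continuousOn.comp_continuous
      (hr₀sm.continuous.prodMk continuous_id)
      (fun ϑ => ⟨hr₀mem ϑ, mem_univ _⟩)
    exact h
  have hFper : ∀ ϑ, F (ϑ + 1) = F ϑ := by
    intro ϑ
    rw [hF]; dsimp only
    rw [hr₀per, hper₁]
  obtain ⟨ϑm, hϑm⟩ := periodic_min hFc hFper
  set m₁ : ℝ := F ϑm with hm₁
  have hm₁s₁ : s₁ < m₁ := by
    have h2 : ρ₁ (r₁ ϑm) ϑm < ρ₁ (r₀ ϑm) ϑm :=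
      hanti₁ ϑm (hr₀mem ϑm) (hr₁mem ϑm) (hrlt ϑm)
    rw [hlev₁ ϑm] at h2
    exact h2
  -- constants
  set c : ℝ := min m₁ s₀ with hc
  set b' : ℝ := (s₁ + c) / 2 with hb'
  have hcs₁ : s₁ < c := lt_min hm₁s₁ hs
  have hb'1 : s₁ < b' := by rw [hb']; linarith
  have hb'pos : 0 < b' := hs₁.trans hb'1
  have hb'm : b' < m₁ := by
    have : c ≤ m₁ := min_le_left _ _
    rw [hb']; linarith
  have hb's : b' < s₀ := by
    have : c ≤ s₀ := min_le_right _ _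
    rw [hb']; linarith
  set η : ℝ := b' - s₁ with hη
  have hηpos : 0 < η := by rw [hη]; linarith
  -- the cutoff θ
  set θ : ℝ → ℝ := fun y => Real.smoothTransition ((b' - y) / η) with hθ
  have hθsm : ContDiff ℝ (⊤ : ℕ∞) θ :=
    Real.smoothTransition.contDiff.comp ((contDiff_const.sub contDiff_id).div_const η)
  have hθ01 : ∀ y, 0 ≤ θ y ∧ θ y ≤ 1 := fun y =>
    ⟨Real.smoothTransition.nonneg _, Real.smoothTransition.le_one _⟩
  have hθone : ∀ y, y ≤ s₁ → θ y = 1 := by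
    intro y hy
    rw [hθ]; dsimp only
    exact Real.smoothTransition.one_of_one_le (by rw [le_div_iff₀ hηpos, hη]; linarith)
  have hθzero : ∀ y, b' ≤ y → θ y = 0 := by
    intro y hy
    rw [hθ]; dsimp only
    exact Real.smoothTransition.zero_of_nonpos
      (div_nonpos_iff.2 (Or.inr ⟨by linarith, hηpos.le⟩))
  have hθpos : ∀ y, y < b' → 0 < θ y := by
    intro y hy
    rw [hθ]; dsimp only
    exact Real.smoothTransition.pos_of_pos (div_pos (by linarith) hηpos)
  have hθd : ∀ y, deriv θ y ≤ 0 := by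
    intro y
    have hl : HasDerivAt (fun y' : ℝ => (b' - y') / η) (-1 / η) y := by
      simpa using ((hasDerivAt_id y).const_sub b').div_const η
    have hst : HasDerivAt Real.smoothTransition
        (deriv Real.smoothTransition ((b' - y) / η)) ((b' - y) / η) :=
      ((Real.smoothTransition.contDiff (n := 1)).differentiable (by simp) _).hasDerivAt
    have hcomp := hst.comp y hl
    have : deriv θ y = deriv Real.smoothTransition ((b' - y) / η) * (-1 / η) := by
      rw [hθ]
      exact hcomp.deriv
    rw [this]
    have h1 := st_deriv_nonneg ((b' - y) / η)
    have h2 : (-1 : ℝ) / η ≤ 0 := by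
      apply div_nonpos_iff.2 (Or.inr ⟨by norm_num, hηpos.le⟩)
    exact mul_nonpos_of_nonneg_of_nonpos h1 h2
  have hθd0 : ∀ y, b' < y → deriv θ y = 0 := by
    intro y hy
    have hev : θ =ᶠ[𝓝 y] fun _ => (0 : ℝ) := by
      filter_upwards [Ioi_mem_nhds hy] with z hz
      exact hθzero z (le_of_lt hz)
    rw [hev.deriv_eq, deriv_const]
  -- the reparametrization A
  obtain ⟨A, hAsm, hAid, hAge, hAd0, hAdpos⟩ := exists_A b' s₀ hb'pos hb's
  -- definition of ρ₂
  refine ⟨fun r ϑ => θ (ρ₁ r ϑ) * ρ₁ r ϑ + (1 - θ (ρ₁ r ϑ)) * A (ρ₀ r ϑ), ?_, ?_, ?_, ?_, ?_, ?_⟩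
  · -- smoothness
    exact ((hθsm.comp_contDiffOn hsm₁).mul hsm₁).add
      ((contDiffOn_const.sub (hθsm.comp_contDiffOn hsm₁)).mul (hAsm.comp_contDiffOn hsm₀))
  · -- periodicity
    intro r ϑ
    simp only [hper₀, hper₁]
  · -- positivity
    intro r hr ϑ
    show 0 < θ (ρ₁ r ϑ) * ρ₁ r ϑ + (1 - θ (ρ₁ r ϑ)) * A (ρ₀ r ϑ)
    have hu : 0 < ρ₁ r ϑ := hpos₁ r hr ϑ
    have hv : 0 < ρ₀ r ϑ := hpos₀ r hr ϑ
    have hA : b' ≤ A (ρ₀ r ϑ) := hAge _ hv.le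
    obtain ⟨h1, h2⟩ := hθ01 (ρ₁ r ϑ)
    rcases eq_or_lt_of_le h1 with hP | hP
    · rw [← hP]
      nlinarith
    · nlinarith [mul_pos hP hu, mul_nonneg (by linarith : (0:ℝ) ≤ 1 - θ (ρ₁ r ϑ))
        (by linarith : (0:ℝ) ≤ A (ρ₀ r ϑ))]
  · -- strict radial decrease
    intro r hr ϑ
    show deriv (fun r' => θ (ρ₁ r' ϑ) * ρ₁ r' ϑ + (1 - θ (ρ₁ r' ϑ)) * A (ρ₀ r' ϑ)) r < 0
    set u : ℝ → ℝ := fun r' => ρ₁ r' ϑ with hudef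
    set v : ℝ → ℝ := fun r' => ρ₀ r' ϑ with hvdef
    have hu : HasDerivAt u (deriv u r) r := (hdiff ρ₁ hsm₁ ϑ r hr).hasDerivAt
    have hv : HasDerivAt v (deriv v r) r := (hdiff ρ₀ hsm₀ ϑ r hr).hasDerivAt
    have hdu : deriv u r < 0 := hdec₁ r hr ϑ
    have hdv : deriv v r < 0 := hdec₀ r hr ϑ
    have hθu : HasDerivAt θ (deriv θ (u r)) (u r) :=
      (hθsm.differentiable (by simp) _).hasDerivAt
    have hAv : HasDerivAt A (deriv A (v r)) (v r) :=
      (hAsm.differentiable (by simp) _).hasDerivAt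
    have hθc : HasDerivAt (fun r' => θ (u r')) (deriv θ (u r) * deriv u r) r := hθu.comp r hu
    have hAc : HasDerivAt (fun r' => A (v r')) (deriv A (v r) * deriv v r) r := hAv.comp r hv
    have hsum : HasDerivAt (fun r' => θ (u r') * u r' + (1 - θ (u r')) * A (v r'))
        ((deriv θ (u r) * deriv u r) * u r + θ (u r) * deriv u r +
          ((0 - deriv θ (u r) * deriv u r) * A (v r) +
            (1 - θ (u r)) * (deriv A (v r) * deriv v r))) r :=
      (hθc.mul hu).add (((hasDerivAt_const r (1:ℝ)).sub hθc).mul hAc)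
    have hderiv : deriv (fun r' => θ (ρ₁ r' ϑ) * ρ₁ r' ϑ + (1 - θ (ρ₁ r' ϑ)) * A (ρ₀ r' ϑ)) r =
        (deriv θ (u r) * deriv u r) * u r + θ (u r) * deriv u r +
          ((0 - deriv θ (u r) * deriv u r) * A (v r) +
            (1 - θ (u r)) * (deriv A (v r) * deriv v r)) := hsum.deriv
    rw [hderiv]
    -- sign analysis
    have hvpos : 0 < v r := hpos₀ r hr ϑ
    have hAb : b' ≤ A (v r) := hAge _ hvpos.le
    have hdA : 0 < deriv A (v r) := hAdpos _ hvpos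
    obtain ⟨hP0, hP1⟩ := hθ01 (u r)
    have hQ : deriv θ (u r) ≤ 0 := hθd (u r)
    have hKey : 0 ≤ deriv θ (u r) * (u r - A (v r)) := by
      rcases le_or_gt (u r) b' with h | h
      · have : u r - A (v r) ≤ 0 := by linarith
        nlinarith [mul_nonneg (neg_nonneg.2 hQ) (neg_nonneg.2 this)]
      · rw [hθd0 (u r) h]; simp
    rcases lt_or_ge 0 (θ (u r)) with hP | hP
    · nlinarith [mul_nonneg (le_of_lt (neg_pos.2 hdu)) hKey,
        mul_pos hP (neg_pos.2 hdu),
        mul_nonneg (by linarith : (0:ℝ) ≤ 1 - θ (u r)) (mul_pos hdA (neg_pos.2 hdv)).le]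
    · have hP' : θ (u r) = 0 := le_antisymm hP hP0
      rw [hP']
      nlinarith [mul_nonneg (le_of_lt (neg_pos.2 hdu)) hKey, mul_pos hdA (neg_pos.2 hdv)]
  · -- agrees with ρ₁ for r ≥ r₁ ϑ
    intro ϑ r hr hge
    show θ (ρ₁ r ϑ) * ρ₁ r ϑ + (1 - θ (ρ₁ r ϑ)) * A (ρ₀ r ϑ) = ρ₁ r ϑ
    have hle : ρ₁ r ϑ ≤ s₁ := by
      rcases eq_or_lt_of_le hge with h | h
      · rw [← h, hlev₁]
      · exact (habove₁ ϑ r hr h).le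
    rw [hθone _ hle]
    ring
  · -- agrees with ρ₀ for r ≤ r₀ ϑ
    intro ϑ r hr hle
    show θ (ρ₁ r ϑ) * ρ₁ r ϑ + (1 - θ (ρ₁ r ϑ)) * A (ρ₀ r ϑ) = ρ₀ r ϑ
    have hge₀ : s₀ ≤ ρ₀ r ϑ := by
      rcases eq_or_lt_of_le hle with h | h
      · rw [h, hlev₀]
      · exact (hbelow₀ ϑ r hr h).le
    have hge₁ : b' ≤ ρ₁ r ϑ := by
      have h1 : m₁ ≤ ρ₁ (r₀ ϑ) ϑ := hϑm ϑ
      rcases eq_or_lt_of_le hle with h | h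
      · rw [h]; linarith
      · have := hanti₁ ϑ hr (hr₀mem ϑ) h
        linarith
    rw [hθzero _ hge₁, hAid _ hge₀]
    ring
end
end
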